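/- arXiv:2106.00536 — 8 statements merged into one kernel-verified Lean document; each statement's English description precedes it below -/
import Mathlib

section
/- Under the generalized selection model, the function z ↦ E[Y₀] + ∫₀^{P_D(z)} m(u) du is a conditional-mean version of Y given Z; that is, for every Borel set B ⊆ ℝ, E[Y·1{Z ∈ B}] = ∫_B ( E[Y₀] + ∫₀^{P_D(z)} m(u) du ) dν(z). (First step in the proof of Proposition 1.) -/
open MeasureTheory ProbabilityTheory

/-- Under the generalized selection model, the function
`z ↦ E[Y₀] + ∫₀^{P_D(z)} m(u) du` is a conditional-mean version of `Y` given `Z`: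
for every Borel set `B ⊆ ℝ`,
`E[Y·1{Z ∈ B}] = ∫_B (E[Y₀] + ∫₀^{P_D(z)} m(u) du) dν(z)`, where `ν` is the law of `Z`. -/
theorem stmt_0
    {Ω : Type*} [MeasurableSpace Ω] (P : Measure Ω) [IsProbabilityMeasure P]
    (Z U Y0 Y1 : Ω → ℝ)
    (hZm : Measurable Z) (hUm : Measurable U) (hY0m : Measurable Y0) (hY1m : Measurable Y1)
    (hindep : IndepFun Z (fun ω => (Y0 ω, Y1 ω, U ω)) P)
    (hUnif : Measure.map U P = volume.restrict (Set.Icc (0:ℝ) 1))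
    (hY0int : Integrable Y0 P) (hY1int : Integrable Y1 P)
    (PD : ℝ → ℝ) (hPDm : Measurable PD) (hPD01 : ∀ z, PD z ∈ Set.Icc (0:ℝ) 1)
    (D : Ω → ℝ) (hD : ∀ ω, D ω = if U ω ≤ PD (Z ω) then 1 else 0)
    (Y : Ω → ℝ) (hY : ∀ ω, Y ω = D ω * Y1 ω + (1 - D ω) * Y0 ω)
    (m : ℝ → ℝ) (hmm : Measurable m) (hmint : IntegrableOn m (Set.Icc 0 1) volume)
    (hmcond : ∀ A : Set ℝ, MeasurableSet A →
      ∫ u in A ∩ Set.Icc (0:ℝ) 1, m u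
        = ∫ ω, (Y1 ω - Y0 ω) * A.indicator 1 (U ω) ∂P) :
    ∀ B : Set ℝ, MeasurableSet B →
      ∫ ω, Y ω * B.indicator 1 (Z ω) ∂P
        = ∫ z in B, ((∫ ω, Y0 ω ∂P) + ∫ u in (0:ℝ)..(PD z), m u) ∂(Measure.map Z P) := by
  classical
  intro B hB
  set W : Ω → ℝ × ℝ × ℝ := fun ω => (Y0 ω, Y1 ω, U ω) with hWdef
  have hWm : Measurable W := (hY0m.prodMk (hY1m.prodMk hUm))
  set μZ := Measure.map Z P with hμZ
  set μW := Measure.map W P with hμW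
  haveI : IsProbabilityMeasure μZ := Measure.isProbabilityMeasure_map hZm.aemeasurable
  haveI : IsProbabilityMeasure μW := Measure.isProbabilityMeasure_map hWm.aemeasurable
  have hprod : Measure.map (fun ω => (Z ω, W ω)) P = μZ.prod μW :=
    (indepFun_iff_map_prod_eq_prod_map_map hZm.aemeasurable hWm.aemeasurable).mp hindep
  -- the integrand as a function on ℝ × (ℝ × ℝ × ℝ)
  set F : ℝ × (ℝ × ℝ × ℝ) → ℝ := fun p =>
    (p.2.1 + (p.2.2.1 - p.2.1) * (if p.2.2.2 ≤ PD p.1 then 1 else 0)) * B.indicator 1 p.1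
    with hFdef
  have hFm : Measurable F := by
    apply Measurable.mul
    · apply Measurable.add
      · exact measurable_snd.fst
      · exact (measurable_snd.snd.fst.sub measurable_snd.fst).mul
          (Measurable.ite (measurableSet_le measurable_snd.snd.snd (hPDm.comp measurable_fst))
            measurable_const measurable_const)
    · exact (measurable_const.indicator hB).comp measurable_fst
  -- pointwise identity
  have hpt : ∀ ω, Y ω * B.indicator 1 (Z ω) = F (Z ω, W ω) := by
    intro ω
    simp only [hFdef, hWdef, hY, hD]
    by_cases h : U ω ≤ PD (Z ω) <;> simp [h] <;> ring
  -- component integrability over μW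
  have hy0W : Integrable (fun w : ℝ × ℝ × ℝ => w.1) μW := by
    rw [hμW, integrable_map_measure measurable_fst.aestronglyMeasurable hWm.aemeasurable]
    exact hY0int
  have hy1W : Integrable (fun w : ℝ × ℝ × ℝ => w.2.1) μW := by
    rw [hμW, integrable_map_measure measurable_snd.fst.aestronglyMeasurable hWm.aemeasurable]
    exact hY1int
  have hgint : Integrable (fun w : ℝ × ℝ × ℝ => |w.1| + |w.2.1 - w.1|) μW :=
    hy0W.abs.add (hy1W.sub hy0W).abs
  -- integrability of F on the product
  have hgprod : Integrable (fun p : ℝ × (ℝ × ℝ × ℝ) => |p.2.1| + |p.2.2.1 - p.2.1|)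
      (μZ.prod μW) := by
    have := (integrable_const (1 : ℝ) (μ := μZ)).mul_prod hgint
    simpa using this
  have hFint : Integrable F (μZ.prod μW) := by
    refine hgprod.mono' hFm.aestronglyMeasurable (Filter.Eventually.of_forall fun p => ?_)
    simp only [hFdef, Real.norm_eq_abs, abs_mul]
    have h1 : |B.indicator (1 : ℝ → ℝ) p.1| ≤ 1 := by
      rw [Set.indicator_apply]; split_ifs <;> simp
    have h2 : |(if p.2.2.2 ≤ PD p.1 then (1:ℝ) else 0)| ≤ 1 := by split_ifs <;> simp
    calc |p.2.1 + (p.2.2.1 - p.2.1) * (if p.2.2.2 ≤ PD p.1 then (1:ℝ) else 0)| *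
          |B.indicator 1 p.1|
        ≤ |p.2.1 + (p.2.2.1 - p.2.1) * (if p.2.2.2 ≤ PD p.1 then (1:ℝ) else 0)| * 1 := by
          exact mul_le_mul_of_nonneg_left h1 (abs_nonneg _)
      _ ≤ |p.2.1| + |p.2.2.1 - p.2.1| := by
          rw [mul_one]
          refine (abs_add_le _ _).trans ?_
          rw [abs_mul]
          nlinarith [abs_nonneg (p.2.2.1 - p.2.1)]
  -- LHS as integral over the product measure
  have hLHS : ∫ ω, Y ω * B.indicator 1 (Z ω) ∂P = ∫ p, F p ∂(μZ.prod μW) := by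
    rw [← hprod, integral_map (hZm.prodMk hWm).aemeasurable hFm.aestronglyMeasurable]
    exact integral_congr_ae (Filter.Eventually.of_forall fun ω => hpt ω)
  rw [hLHS, integral_prod F hFint]
  -- compute the inner integral for each z
  have hinner : ∀ z : ℝ, ∫ w, F (z, w) ∂μW =
      ((∫ ω, Y0 ω ∂P) + ∫ u in (0:ℝ)..(PD z), m u) * B.indicator 1 z := by
    intro z
    have hifm : Measurable fun w : ℝ × ℝ × ℝ =>
        (w.2.1 - w.1) * (if w.2.2 ≤ PD z then (1:ℝ) else 0) :=
      (measurable_snd.fst.sub measurable_fst).mul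
        (Measurable.ite (measurableSet_le measurable_snd.snd measurable_const)
          measurable_const measurable_const)
    have hifint : Integrable (fun w : ℝ × ℝ × ℝ =>
        (w.2.1 - w.1) * (if w.2.2 ≤ PD z then (1:ℝ) else 0)) μW := by
      have habs : Integrable (fun w : ℝ × ℝ × ℝ => |w.2.1 - w.1|) μW := by
        simpa using (hy1W.sub hy0W).abs
      refine habs.mono' hifm.aestronglyMeasurable (Filter.Eventually.of_forall fun w => ?_)
      have he : |(if w.2.2 ≤ PD z then (1:ℝ) else 0)| ≤ 1 := by split_ifs <;> simp
      calc ‖(w.2.1 - w.1) * (if w.2.2 ≤ PD z then (1:ℝ) else 0)‖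
          = |w.2.1 - w.1| * |(if w.2.2 ≤ PD z then (1:ℝ) else 0)| := by
            rw [Real.norm_eq_abs, abs_mul]
        _ ≤ |w.2.1 - w.1| := mul_le_of_le_one_right (abs_nonneg _) he
    have step1 : ∫ w, F (z, w) ∂μW =
        (∫ w : ℝ × ℝ × ℝ, (w.1 + (w.2.1 - w.1) * (if w.2.2 ≤ PD z then (1:ℝ) else 0)) ∂μW) *
          B.indicator 1 z := by
      simp only [hFdef]
      rw [integral_mul_const]
    rw [step1, integral_add hy0W hifint]
    congr 2
    · rw [hμW, integral_map hWm.aemeasurable measurable_fst.aestronglyMeasurable]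
    · -- second piece equals ∫₀^{PD z} m
      have hmap : ∫ w : ℝ × ℝ × ℝ, (w.2.1 - w.1) * (if w.2.2 ≤ PD z then (1:ℝ) else 0) ∂μW
          = ∫ ω, (Y1 ω - Y0 ω) * (Set.Iic (PD z)).indicator 1 (U ω) ∂P := by
        rw [hμW, integral_map hWm.aemeasurable hifm.aestronglyMeasurable]
        refine integral_congr_ae (Filter.Eventually.of_forall fun ω => ?_)
        simp [hWdef, Set.indicator_apply, Set.mem_Iic]
      rw [hmap, ← hmcond (Set.Iic (PD z)) measurableSet_Iic]
      have hset : Set.Iic (PD z) ∩ Set.Icc (0:ℝ) 1 = Set.Icc 0 (PD z) := by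
        obtain ⟨h0, h1⟩ := hPD01 z
        ext u
        simp only [Set.mem_inter_iff, Set.mem_Iic, Set.mem_Icc]
        constructor
        · rintro ⟨hu, hu0, _⟩; exact ⟨hu0, hu⟩
        · rintro ⟨hu0, hu⟩; exact ⟨hu, hu0, hu.trans h1⟩
      rw [hset, intervalIntegral.integral_of_le (hPD01 z).1,
        ← MeasureTheory.integral_Icc_eq_integral_Ioc]
  rw [integral_congr_ae (Filter.Eventually.of_forall hinner)]
  rw [← integral_indicator hB]
  refine integral_congr_ae (Filter.Eventually.of_forall fun z => ?_)
  simp only [Set.indicator_apply]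
  split_ifs <;> simp
end

section
/- Proposition 2, part 2, sup-norm case. Let 𝒵 ⊆ ℝ, c ∈ [1, ∞), and let f, θ, r : 𝒵 → ℝ satisfy, for every z ∈ 𝒵, r(z) ∈ [1/c, c] and f(z) = r(z)·θ(z). Then for every θ̃ ∈ Θ₁, sup_{z ∈ 𝒵} |θ(z) − θ̃(z)| ≤ ((c² − 1)/c) · sup_{z ∈ 𝒵} |f(z)| (as an inequality in [0, ∞]). -/
/-- Membership of `θ̃` in the uniform outer set `Θ₁` determined by `f` and `c` on `𝒵`. -/
def MemTheta1 (𝒵 : Set ℝ) (f : ℝ → ℝ) (c : ℝ) (θt : ℝ → ℝ) : Prop :=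
  ∀ z ∈ 𝒵,
    (0 ≤ f z → θt z ∈ Set.Icc (f z / c) (c * f z)) ∧
    (f z < 0 → θt z ∈ Set.Icc (c * f z) (f z / c))

/-- **Proposition 2, part 2, sup-norm case.**
If `r(z) ∈ [1/c, c]` and `f(z) = r(z)·θ(z)` on `𝒵`, with `c ≥ 1`, then for every `θ̃ ∈ Θ₁`,
`sup_{z ∈ 𝒵} |θ(z) − θ̃(z)| ≤ ((c² − 1)/c) · sup_{z ∈ 𝒵} |f(z)|` (inequality in `[0, ∞]`). -/
theorem stmt_5
    (𝒵 : Set ℝ) (c : ℝ) (hc : 1 ≤ c) (f θ r : ℝ → ℝ)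
    (hr : ∀ z ∈ 𝒵, r z ∈ Set.Icc (1 / c) c)
    (hf : ∀ z ∈ 𝒵, f z = r z * θ z) :
    ∀ θt : ℝ → ℝ, MemTheta1 𝒵 f c θt →
      (⨆ z ∈ 𝒵, ENNReal.ofReal |θ z - θt z|)
        ≤ ENNReal.ofReal ((c ^ 2 - 1) / c) * ⨆ z ∈ 𝒵, ENNReal.ofReal |f z| := by
  intro θt hθt
  have hc0 : (0:ℝ) < c := lt_of_lt_of_le one_pos hc
  refine iSup₂_le fun z hz => ?_
  obtain ⟨hr1, hr2⟩ := hr z hz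
  have hrpos : 0 < r z := lt_of_lt_of_le (by positivity) hr1
  have hθ : θ z = f z / r z := by
    field_simp [hf z hz]
    linarith [hf z hz, mul_comm (θ z) (r z)]
  have hK : (0:ℝ) ≤ (c ^ 2 - 1) / c := div_nonneg (by nlinarith) hc0.le
  have key : |θ z - θt z| ≤ ((c ^ 2 - 1) / c) * |f z| := by
    rcases le_or_gt 0 (f z) with hfz | hfz
    · obtain ⟨h1, h2⟩ := (hθt z hz).1 hfz
      have hlo : f z / c ≤ θ z := by
        rw [hθ]; exact div_le_div_of_nonneg_left hfz hrpos hr2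
      have hhi : θ z ≤ c * f z := by
        rw [hθ]
        have : f z / r z ≤ f z / (1 / c) :=
          div_le_div_of_nonneg_left hfz (by positivity) hr1
        calc f z / r z ≤ f z / (1 / c) := this
          _ = c * f z := by field_simp
      rw [abs_of_nonneg hfz]
      rw [abs_le]
      constructor
      · have : c * f z - f z / c = ((c ^ 2 - 1) / c) * f z := by field_simp
        nlinarith [this]
      · have : c * f z - f z / c = ((c ^ 2 - 1) / c) * f z := by field_simp
        nlinarith [this]
    · obtain ⟨h1, h2⟩ := (hθt z hz).2 hfz
      have hθneg : θ z < 0 := by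
        rw [hθ]; exact div_neg_of_neg_of_pos hfz hrpos
      have hcr : 1 ≤ r z * c := (div_le_iff₀ hc0).mp hr1
      have hfz' := hf z hz
      have hlo : c * f z ≤ θ z := by nlinarith
      have hhi : θ z ≤ f z / c := by
        rw [le_div_iff₀ hc0]; nlinarith
      rw [abs_of_neg hfz, abs_le]
      have hkey : f z / c - c * f z = ((c ^ 2 - 1) / c) * (-f z) := by
        field_simp; ring
      constructor <;> nlinarith [hkey]
  calc ENNReal.ofReal |θ z - θt z|
      ≤ ENNReal.ofReal (((c ^ 2 - 1) / c) * |f z|) := ENNReal.ofReal_le_ofReal key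
    _ = ENNReal.ofReal ((c ^ 2 - 1) / c) * ENNReal.ofReal |f z| :=
        ENNReal.ofReal_mul hK
    _ ≤ ENNReal.ofReal ((c ^ 2 - 1) / c) * ⨆ z ∈ 𝒵, ENNReal.ofReal |f z| :=
        mul_le_mul_right (le_iSup₂ (f := fun z _ => ENNReal.ofReal |f z|) z hz) _
end

section
/- Proposition 2, part 2, L^d case. Let 𝒵 ⊆ ℝ be a Borel set, c ∈ [1, ∞), and let f, θ, r : 𝒵 → ℝ be Borel functions satisfying, for every z ∈ 𝒵, r(z) ∈ [1/c, c] and f(z) = r(z)·θ(z). Then for every Borel θ̃ ∈ Θ₁ and every d ∈ (0, ∞), ( ∫_𝒵 |θ(z) − θ̃(z)|^d dz )^{1/d} ≤ ((c² − 1)/c) · ( ∫_𝒵 |f(z)|^d dz )^{1/d}, where the integrals are with respect to Lebesgue measure and the inequality is in [0, ∞]. -/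
open MeasureTheory

/-- **Proposition 2, part 2, `L^d` case.**
If `r(z) ∈ [1/c, c]` and `f(z) = r(z)·θ(z)` on the Borel set `𝒵`, with `c ≥ 1`, `f, θ, r, θ̃`
Borel measurable and `θ̃ ∈ Θ₁`, then for every `d ∈ (0, ∞)`,
`(∫_𝒵 |θ − θ̃|^d dz)^{1/d} ≤ ((c² − 1)/c) · (∫_𝒵 |f|^d dz)^{1/d}`,
with Lebesgue integrals and the inequality in `[0, ∞]`. -/
theorem stmt_6
    (𝒵 : Set ℝ) (h𝒵 : MeasurableSet 𝒵) (c : ℝ) (hc : 1 ≤ c) (f θ r θt : ℝ → ℝ)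
    (hfm : Measurable f) (hθm : Measurable θ) (hrm : Measurable r) (hθtm : Measurable θt)
    (hr : ∀ z ∈ 𝒵, r z ∈ Set.Icc (1 / c) c)
    (hf : ∀ z ∈ 𝒵, f z = r z * θ z)
    (hθt : MemTheta1 𝒵 f c θt)
    (d : ℝ) (hd : 0 < d) :
    (∫⁻ z in 𝒵, ENNReal.ofReal |θ z - θt z| ^ d) ^ (1 / d)
      ≤ ENNReal.ofReal ((c ^ 2 - 1) / c) * (∫⁻ z in 𝒵, ENNReal.ofReal |f z| ^ d) ^ (1 / d) := by
  have hc0 : (0:ℝ) < c := lt_of_lt_of_le one_pos hc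
  have hK0 : (0:ℝ) ≤ (c ^ 2 - 1) / c := div_nonneg (by nlinarith) hc0.le
  have key : ∀ z ∈ 𝒵, |θ z - θt z| ≤ (c ^ 2 - 1) / c * |f z| := by
    intro z hz
    have hrz := hr z hz
    have hr0 : 0 < r z := lt_of_lt_of_le (by positivity) hrz.1
    have hθz : θ z = f z / r z := by
      rw [hf z hz]; field_simp
    rcases le_or_gt 0 (f z) with hfz | hfz
    · have ht := (hθt z hz).1 hfz
      have h1 : f z / c ≤ θ z := by
        rw [hθz]; gcongr; exact hrz.2
      have h2 : θ z ≤ c * f z := by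
        rw [hθz, div_le_iff₀ hr0]
        have hcr : 1 ≤ r z * c := (div_le_iff₀ hc0).mp hrz.1
        nlinarith [mul_nonneg (sub_nonneg.mpr hcr) hfz]
      have hK : (c ^ 2 - 1) / c * |f z| = c * f z - f z / c := by
        rw [abs_of_nonneg hfz]; field_simp
      rw [hK, abs_sub_le_iff]
      exact ⟨by linarith [ht.1, ht.2], by linarith [ht.1, ht.2]⟩
    · have ht := (hθt z hz).2 hfz
      have hθneg : θ z < 0 := by
        rw [hθz]; exact div_neg_of_neg_of_pos hfz hr0
      have hcr : 1 ≤ r z * c := (div_le_iff₀ hc0).mp hrz.1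
      have h1 : c * f z ≤ θ z := by
        rw [hf z hz]
        nlinarith [mul_nonpos_of_nonneg_of_nonpos (sub_nonneg.mpr hcr) hθneg.le]
      have h2 : θ z ≤ f z / c := by
        rw [hf z hz, le_div_iff₀ hc0]
        nlinarith [mul_nonpos_of_nonneg_of_nonpos (sub_nonneg.mpr hrz.2) hθneg.le]
      have hK : (c ^ 2 - 1) / c * |f z| = f z / c - c * f z := by
        rw [abs_of_neg hfz]; field_simp; ring
      rw [hK, abs_sub_le_iff]
      exact ⟨by linarith [ht.1, ht.2], by linarith [ht.1, ht.2]⟩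
  set K : ENNReal := ENNReal.ofReal ((c ^ 2 - 1) / c) with hKdef
  have hKtop : K ^ d ≠ ⊤ := by
    simp [hKdef, ENNReal.rpow_ne_top_of_nonneg hd.le]
  calc (∫⁻ z in 𝒵, ENNReal.ofReal |θ z - θt z| ^ d) ^ (1 / d)
      ≤ (∫⁻ z in 𝒵, (K * ENNReal.ofReal |f z|) ^ d) ^ (1 / d) := by
        apply ENNReal.rpow_le_rpow _ (by positivity)
        apply setLIntegral_mono
        · apply Measurable.pow_const
          exact (measurable_const.mul (hfm.abs.ennreal_ofReal))
        · intro z hz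
          apply ENNReal.rpow_le_rpow _ hd.le
          rw [hKdef, ← ENNReal.ofReal_mul hK0]
          exact ENNReal.ofReal_le_ofReal (key z hz)
    _ = (K ^ d * ∫⁻ z in 𝒵, ENNReal.ofReal |f z| ^ d) ^ (1 / d) := by
        rw [← lintegral_const_mul' _ _ hKtop]
        congr 1
        apply lintegral_congr
        intro z
        rw [ENNReal.mul_rpow_of_nonneg _ _ hd.le]
    _ = K * (∫⁻ z in 𝒵, ENNReal.ofReal |f z| ^ d) ^ (1 / d) := by
        rw [ENNReal.mul_rpow_of_nonneg _ _ (by positivity : (0:ℝ) ≤ 1 / d),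
          ← ENNReal.rpow_mul, mul_one_div_cancel hd.ne', ENNReal.rpow_one]
end

section
/- Proposition 3 (sharp identified set for the MTE function, binary outcome). Let 𝒵 ⊆ ℝ be an open interval with a point z₀ ∈ 𝒵, let ν be a Borel probability measure on ℝ with ν(𝒵) = 1, let c ∈ [1, ∞), let P_T : 𝒵 → [0,1] be continuously differentiable with P_T′(z) ≠ 0 for all z, and let f : 𝒵 → ℝ be continuous. Suppose a : 𝒵 → [1/c, c] is continuous and b̃ ∈ ℝ are such that P̃(z) := b̃ + ∫_{z₀}^{z} a(t)·P_T′(t) dt defines an injective map of 𝒵 into [0,1], and that θ̃(z) := f(z)/a(z) satisfies −1 ≤ θ̃(z) ≤ 1 for all z ∈ 𝒵. Then there exist a probability space carrying random variables Z, Ũ, Ỹ₀, Ỹ₁ and a Borel function m̃ : [0,1] → [−1,1] such that: (i) Z has law ν; (ii) Ũ is uniformly distributed on [0,1]; (iii) Z is independent of the triple (Ỹ₀, Ỹ₁, Ũ); (iv) Ỹ₀ and Ỹ₁ take values in {0,1}; (v) m̃ is a conditional-mean version of Ỹ₁ − Ỹ₀ given Ũ, i.e. ∫_A m̃(u) du =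 E[(Ỹ₁ − Ỹ₀)·1{Ũ ∈ A}] for every Borel A ⊆ [0,1]; (vi) m̃(P̃(z)) = θ̃(z) for every z ∈ 𝒵; and (vii) the function z ↦ E[Ỹ₀] + ∫₀^{P̃(z)} m̃(u) du is differentiable on 𝒵 with derivative f(z)·P_T′(z) at every z ∈ 𝒵. -/
open MeasureTheory ProbabilityTheory intervalIntegral
open Filter Topology

/-- **Proposition 3, sharp identified set for the MTE, binary outcome.**
Given an open interval `𝒵 ∋ z₀`, a Borel probability measure `ν` with `ν(𝒵) = 1`, `c ≥ 1`,
`P_T : 𝒵 → [0,1]` continuously differentiable with `P_T′ ≠ 0`, `f` continuous on `𝒵`,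
a continuous `a : 𝒵 → [1/c, c]` and `b̃ ∈ ℝ` such that `P̃(z) = b̃ + ∫_{z₀}^z a·P_T′` is an
injective map of `𝒵` into `[0,1]`, and `θ̃(z) = f(z)/a(z)` with `−1 ≤ θ̃ ≤ 1` on `𝒵`:
there exist a probability space carrying `Z, Ũ, Ỹ₀, Ỹ₁` and a Borel `m̃ : [0,1] → [−1,1]`
satisfying (i)–(vii). -/
theorem stmt_8
    (𝒵 : Set ℝ) (h𝒵open : IsOpen 𝒵) (h𝒵conn : 𝒵.OrdConnected)
    (z₀ : ℝ) (hz₀ : z₀ ∈ 𝒵)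
    (ν : Measure ℝ) [IsProbabilityMeasure ν] (hν : ν 𝒵 = 1)
    (c : ℝ) (hc : 1 ≤ c)
    (PT PT' f a : ℝ → ℝ)
    (hPT01 : ∀ z ∈ 𝒵, PT z ∈ Set.Icc (0:ℝ) 1)
    (hPT : ∀ z ∈ 𝒵, HasDerivAt PT (PT' z) z)
    (hPT'cont : ContinuousOn PT' 𝒵)
    (hPT'ne : ∀ z ∈ 𝒵, PT' z ≠ 0)
    (hfcont : ContinuousOn f 𝒵)
    (hacont : ContinuousOn a 𝒵)
    (harange : ∀ z ∈ 𝒵, a z ∈ Set.Icc (1 / c) c)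
    (btil : ℝ)
    (Ptil : ℝ → ℝ) (hPtil : ∀ z, Ptil z = btil + ∫ t in z₀..z, a t * PT' t)
    (hPtilinj : Set.InjOn Ptil 𝒵)
    (hPtil01 : ∀ z ∈ 𝒵, Ptil z ∈ Set.Icc (0:ℝ) 1)
    (θtil : ℝ → ℝ) (hθtil : ∀ z, θtil z = f z / a z)
    (hθtil_bdd : ∀ z ∈ 𝒵, θtil z ∈ Set.Icc (-1 : ℝ) 1) :
    ∃ (Ω : Type) (_ : MeasurableSpace Ω) (P : Measure Ω) (_ : IsProbabilityMeasure P)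
      (Z U Y0 Y1 : Ω → ℝ) (mtil : ℝ → ℝ),
      Measurable Z ∧ Measurable U ∧ Measurable Y0 ∧ Measurable Y1 ∧ Measurable mtil ∧
      (∀ u ∈ Set.Icc (0:ℝ) 1, mtil u ∈ Set.Icc (-1 : ℝ) 1) ∧
      -- (i) Z has law ν
      Measure.map Z P = ν ∧
      -- (ii) Ũ is uniformly distributed on [0,1]
      Measure.map U P = volume.restrict (Set.Icc (0:ℝ) 1) ∧
      -- (iii) Z is independent of (Ỹ₀, Ỹ₁, Ũ)
      IndepFun Z (fun ω => (Y0 ω, Y1 ω, U ω)) P ∧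
      -- (iv) Ỹ₀ and Ỹ₁ take values in {0,1}
      (∀ ω, Y0 ω = 0 ∨ Y0 ω = 1) ∧ (∀ ω, Y1 ω = 0 ∨ Y1 ω = 1) ∧
      -- (v) m̃ is a conditional-mean version of Ỹ₁ − Ỹ₀ given Ũ
      (∀ A : Set ℝ, MeasurableSet A →
        ∫ u in A ∩ Set.Icc (0:ℝ) 1, mtil u
          = ∫ ω, (Y1 ω - Y0 ω) * A.indicator 1 (U ω) ∂P) ∧
      -- (vi) m̃(P̃(z)) = θ̃(z) on 𝒵
      (∀ z ∈ 𝒵, mtil (Ptil z) = θtil z) ∧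
      -- (vii) z ↦ E[Ỹ₀] + ∫₀^{P̃(z)} m̃ has derivative f(z)·P_T′(z) on 𝒵
      (∀ z ∈ 𝒵, HasDerivAt
        (fun z' => (∫ ω, Y0 ω ∂P) + ∫ u in (0:ℝ)..(Ptil z'), mtil u)
        (f z * PT' z) z) := by
  classical
  have hc0 : (0:ℝ) < c := lt_of_lt_of_le one_pos hc
  have hapos : ∀ z ∈ 𝒵, 0 < a z := fun z hz =>
    lt_of_lt_of_le (by positivity) (harange z hz).1
  have hane : ∀ z ∈ 𝒵, a z ≠ 0 := fun z hz => (hapos z hz).ne'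
  have hθcont : ContinuousOn θtil 𝒵 :=
    (hfcont.div hacont hane).congr fun z _ => hθtil z
  have haPT'cont : ContinuousOn (fun t => a t * PT' t) 𝒵 := hacont.mul hPT'cont
  have hPe : Ptil = fun z' => btil + ∫ t in z₀..z', a t * PT' t := funext hPtil
  have hPtilD : ∀ z ∈ 𝒵, HasDerivAt Ptil (a z * PT' z) z := by
    intro z hz
    have hsub : Set.uIcc z₀ z ⊆ 𝒵 := h𝒵conn.uIcc_subset hz₀ hz
    have hint : IntervalIntegrable (fun t => a t * PT' t) volume z₀ z :=
      (haPT'cont.mono hsub).intervalIntegrable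
    have hmeas : StronglyMeasurableAtFilter (fun t => a t * PT' t) (𝓝 z) volume :=
      haPT'cont.stronglyMeasurableAtFilter h𝒵open z hz
    have hca : ContinuousAt (fun t => a t * PT' t) z :=
      haPT'cont.continuousAt (h𝒵open.mem_nhds hz)
    have h := (intervalIntegral.integral_hasDerivAt_right hint hmeas hca).const_add btil
    rw [hPe]; exact h
  have hD_ne : ∀ z ∈ 𝒵, a z * PT' z ≠ 0 := fun z hz =>
    mul_ne_zero (hane z hz) (hPT'ne z hz)
  have hstrict : ∀ z ∈ 𝒵, HasStrictDerivAt Ptil (a z * PT' z) z := fun z hz =>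
    hasStrictDerivAt_of_hasDerivAt_of_continuousAt
      (Filter.eventually_of_mem (h𝒵open.mem_nhds hz) fun y hy => hPtilD y hy)
      (haPT'cont.continuousAt (h𝒵open.mem_nhds hz))
  set J : Set ℝ := Ptil '' 𝒵 with hJ
  set g : ℝ → ℝ := fun u => θtil (Function.invFunOn Ptil 𝒵 u) with hg
  set mtil : ℝ → ℝ := fun u => if u ∈ J then g u else 0 with hm
  have hinvmem : ∀ u ∈ J, Function.invFunOn Ptil 𝒵 u ∈ 𝒵 := by
    rintro u ⟨z, hz, rfl⟩; exact Function.invFunOn_mem ⟨z, hz, rfl⟩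
  have hPtilinv : ∀ u ∈ J, Ptil (Function.invFunOn Ptil 𝒵 u) = u := by
    rintro u ⟨z, hz, rfl⟩; exact Function.invFunOn_eq ⟨z, hz, rfl⟩
  have hinvPtil : ∀ z ∈ 𝒵, Function.invFunOn Ptil 𝒵 (Ptil z) = z := fun z hz =>
    hPtilinj.leftInvOn_invFunOn hz
  have hmem_bdd : ∀ u, mtil u ∈ Set.Icc (-1:ℝ) 1 := by
    intro u
    by_cases hu : u ∈ J
    · simp only [hm, hg, if_pos hu]; exact hθtil_bdd _ (hinvmem u hu)
    · simp only [hm, if_neg hu]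
      exact ⟨by norm_num, by norm_num⟩
  have hmtil_eq : ∀ z ∈ 𝒵, mtil (Ptil z) = θtil z := by
    intro z hz
    have hmem : Ptil z ∈ J := ⟨z, hz, rfl⟩
    simp only [hm, hg, if_pos hmem, hinvPtil z hz]
  have key : ∀ z ∈ 𝒵, J ∈ 𝓝 (Ptil z) ∧ ContinuousAt mtil (Ptil z) := by
    intro z hz
    have hs := hstrict z hz
    have hne := hD_ne z hz
    have hmap : Filter.map Ptil (𝓝 z) = 𝓝 (Ptil z) := hs.map_nhds_eq hne
    have hJnhds : J ∈ 𝓝 (Ptil z) := by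
      rw [← hmap]
      exact Filter.mem_map.2 (Filter.mem_of_superset (h𝒵open.mem_nhds hz)
        (Set.subset_preimage_image Ptil 𝒵))
    refine ⟨hJnhds, ?_⟩
    have e := hs.hasStrictFDerivAt_equiv hne
    set ψ : ℝ → ℝ := e.localInverse Ptil _ z with hψ
    have hψcont : ContinuousAt ψ (Ptil z) := e.localInverse_continuousAt
    have hψz : ψ (Ptil z) = z := e.localInverse_apply_image
    have hψmem : ∀ᶠ y in 𝓝 (Ptil z), ψ y ∈ 𝒵 := by
      have h1 : 𝒵 ∈ 𝓝 (ψ (Ptil z)) := by rw [hψz]; exact h𝒵open.mem_nhds hz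
      exact hψcont h1
    have hright : ∀ᶠ y in 𝓝 (Ptil z), Ptil (ψ y) = y := e.eventually_right_inverse
    have heq : mtil =ᶠ[𝓝 (Ptil z)] fun y => θtil (ψ y) := by
      filter_upwards [hψmem, hright, hJnhds] with y h1 h2 h3
      have hinv : Function.invFunOn Ptil 𝒵 y = ψ y := by
        apply hPtilinj (hinvmem y h3) h1
        rw [hPtilinv y h3, h2]
      simp only [hm, hg, if_pos h3, hinv]
    have hθψ : ContinuousAt (fun y => θtil (ψ y)) (Ptil z) := by
      have hθ : ContinuousAt θtil (ψ (Ptil z)) := by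
        rw [hψz]; exact hθcont.continuousAt (h𝒵open.mem_nhds hz)
      exact hθ.comp hψcont
    exact hθψ.congr heq.symm
  have hJopen : IsOpen J := by
    rw [isOpen_iff_mem_nhds]
    rintro u ⟨z, hz, rfl⟩
    exact (key z hz).1
  have hmtil_meas : Measurable mtil := by
    apply measurable_of_isOpen
    intro O hO
    have hopen : IsOpen (J ∩ mtil ⁻¹' O) := by
      rw [isOpen_iff_mem_nhds]
      rintro u ⟨⟨z, hz, rfl⟩, huO⟩
      exact Filter.inter_mem (key z hz).1 ((key z hz).2 (hO.mem_nhds huO))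
    by_cases h0 : (0:ℝ) ∈ O
    · have hEq : mtil ⁻¹' O = (J ∩ mtil ⁻¹' O) ∪ Jᶜ := by
        ext u
        by_cases hu : u ∈ J
        · simp [Set.mem_preimage, hu]
        · simp [Set.mem_preimage, hu, hm, h0]
      rw [hEq]
      exact hopen.measurableSet.union hJopen.measurableSet.compl
    · have hEq : mtil ⁻¹' O = J ∩ mtil ⁻¹' O := by
        ext u
        by_cases hu : u ∈ J
        · simp [Set.mem_preimage, hu]
        · simp [Set.mem_preimage, hu, hm, h0]
      rw [hEq]
      exact hopen.measurableSet
  -- the probability space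
  set μ : Measure ℝ := volume.restrict (Set.Icc (0:ℝ) 1) with hμ
  haveI hμprob : IsProbabilityMeasure μ := ⟨by simp [hμ, Real.volume_Icc]⟩
  set y1 : ℝ × ℝ → ℝ := fun p => if p.2 ≤ max (mtil p.1) 0 then 1 else 0 with hy1
  set y0 : ℝ × ℝ → ℝ := fun p => if p.2 ≤ max (-(mtil p.1)) 0 then 1 else 0 with hy0
  have hy1meas : Measurable y1 := by
    refine Measurable.ite ?_ measurable_const measurable_const
    exact measurableSet_le measurable_snd
      ((hmtil_meas.comp measurable_fst).max measurable_const)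
  have hy0meas : Measurable y0 := by
    refine Measurable.ite ?_ measurable_const measurable_const
    exact measurableSet_le measurable_snd
      (((hmtil_meas.comp measurable_fst).neg).max measurable_const)
  set P : Measure (ℝ × ℝ × ℝ) := ν.prod (μ.prod μ) with hP
  haveI : IsProbabilityMeasure P := by rw [hP]; infer_instance
  refine ⟨ℝ × ℝ × ℝ, inferInstance, P, inferInstance,
    (fun ω => ω.1), (fun ω => ω.2.1), (fun ω => y0 ω.2), (fun ω => y1 ω.2), mtil,
    measurable_fst, measurable_fst.comp measurable_snd,
    hy0meas.comp measurable_snd, hy1meas.comp measurable_snd, hmtil_meas,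
    fun u _ => hmem_bdd u, ?_, ?_, ?_, ?_, ?_, ?_, ?_, ?_⟩
  · -- (i)
    show Measure.map Prod.fst P = ν
    rw [hP, Measure.map_fst_prod, measure_univ, one_smul]
  · -- (ii)
    show Measure.map (Prod.fst ∘ Prod.snd) P = volume.restrict (Set.Icc (0:ℝ) 1)
    rw [← Measure.map_map measurable_fst measurable_snd, hP,
      Measure.map_snd_prod, measure_univ, one_smul,
      Measure.map_fst_prod, measure_univ, one_smul]
  · -- (iii)
    have base : IndepFun Prod.fst Prod.snd P := by
      rw [ProbabilityTheory.indepFun_iff_measure_inter_preimage_eq_mul]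
      intro s t hs ht
      have e1 : (Prod.fst ⁻¹' s ∩ Prod.snd ⁻¹' t : Set (ℝ × (ℝ × ℝ))) = s ×ˢ t := by
        ext ⟨x, y⟩; simp [Set.mem_prod]
      have e2 : (Prod.fst ⁻¹' s : Set (ℝ × (ℝ × ℝ))) = s ×ˢ Set.univ := by
        ext ⟨x, y⟩; simp [Set.mem_prod]
      have e3 : (Prod.snd ⁻¹' t : Set (ℝ × (ℝ × ℝ))) = Set.univ ×ˢ t := by
        ext ⟨x, y⟩; simp [Set.mem_prod]
      rw [e1, e2, e3, hP, Measure.prod_prod, Measure.prod_prod, Measure.prod_prod,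
        measure_univ, measure_univ, one_mul, mul_one]
    have hψm : Measurable (fun p : ℝ × ℝ => (y0 p, y1 p, p.1)) :=
      hy0meas.prodMk (hy1meas.prodMk measurable_fst)
    exact base.comp measurable_id hψm
  · -- (iv) for Y0
    intro ω
    by_cases h : ω.2.2 ≤ max (-(mtil ω.2.1)) 0
    · right; simp only [hy0]; rw [if_pos h]
    · left; simp only [hy0]; rw [if_neg h]
  · -- (iv) for Y1
    intro ω
    by_cases h : ω.2.2 ≤ max (mtil ω.2.1) 0
    · right; simp only [hy1]; rw [if_pos h]
    · left; simp only [hy1]; rw [if_neg h]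
  · -- (v)
    intro A hA
    set h : ℝ × ℝ → ℝ := fun p => (y1 p - y0 p) * A.indicator 1 p.1 with hh
    have hindmeas : Measurable (A.indicator (1 : ℝ → ℝ)) := measurable_one.indicator hA
    have hhmeas : Measurable h :=
      (hy1meas.sub hy0meas).mul (hindmeas.comp measurable_fst)
    have hbd : ∀ p, ‖h p‖ ≤ 2 := by
      intro p
      have h1 : |y1 p - y0 p| ≤ 2 := by
        have e1 : |y1 p| ≤ 1 := by
          simp only [hy1]; split_ifs <;> norm_num
        have e0 : |y0 p| ≤ 1 := by
          simp only [hy0]; split_ifs <;> norm_num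
        calc |y1 p - y0 p| ≤ |y1 p| + |y0 p| := abs_sub _ _
          _ ≤ 2 := by linarith
      have h2 : |A.indicator (1 : ℝ → ℝ) p.1| ≤ 1 := by
        by_cases hq : p.1 ∈ A <;> simp [Set.indicator_apply, hq]
      calc ‖h p‖ = |y1 p - y0 p| * |A.indicator 1 p.1| := by
            rw [hh]; simp [Real.norm_eq_abs, abs_mul]
        _ ≤ 2 * 1 := mul_le_mul h1 h2 (abs_nonneg _) (by norm_num)
        _ = 2 := by norm_num
    have hint : Integrable h (μ.prod μ) :=
      (integrable_const (2:ℝ)).mono' hhmeas.aestronglyMeasurable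
        (Filter.Eventually.of_forall hbd)
    have hsnd : Measure.map Prod.snd P = μ.prod μ := by
      rw [hP, Measure.map_snd_prod, measure_univ, one_smul]
    have hRHS : (∫ ω : ℝ × ℝ × ℝ, (y1 ω.2 - y0 ω.2) * A.indicator 1 ω.2.1 ∂P)
        = ∫ p, h p ∂(μ.prod μ) := by
      rw [← hsnd, MeasureTheory.integral_map measurable_snd.aemeasurable
        (hsnd ▸ hhmeas.aestronglyMeasurable : AEStronglyMeasurable h (Measure.map Prod.snd P))]
    have hIic : ∀ t : ℝ, 0 ≤ t → t ≤ 1 → (∫ v, (if v ≤ t then (1:ℝ) else 0) ∂μ) = t := by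
      intro t ht0 ht1
      have hfe : (fun v => if v ≤ t then (1:ℝ) else 0) = (Set.Iic t).indicator 1 := by
        funext v; by_cases hv : v ≤ t <;> simp [Set.indicator_apply, Set.mem_Iic, hv]
      rw [hfe, MeasureTheory.integral_indicator_one measurableSet_Iic]
      have hμt : μ (Set.Iic t) = ENNReal.ofReal t := by
        rw [hμ, Measure.restrict_apply measurableSet_Iic]
        have hset : Set.Iic t ∩ Set.Icc 0 1 = Set.Icc 0 t := by
          ext x
          simp only [Set.mem_inter_iff, Set.mem_Iic, Set.mem_Icc]
          constructor
          · rintro ⟨h1, h2, h3⟩; exact ⟨h2, h1⟩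
          · rintro ⟨h1, h2⟩; exact ⟨h2, h1, h2.trans ht1⟩
        rw [hset, Real.volume_Icc, sub_zero]
      rw [measureReal_def, hμt, ENNReal.toReal_ofReal ht0]
    have hii : ∀ t : ℝ, Integrable (fun v => if v ≤ t then (1:ℝ) else 0) μ := by
      intro t
      have hfe : (fun v => if v ≤ t then (1:ℝ) else 0)
          = (Set.Iic t).indicator (fun _ => (1:ℝ)) := by
        funext v; by_cases hv : v ≤ t <;> simp [Set.indicator_apply, Set.mem_Iic, hv]
      rw [hfe]
      exact (integrable_const 1).indicator measurableSet_Iic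
    have hinner : ∀ u : ℝ, (∫ v, h (u, v) ∂μ) = mtil u * A.indicator 1 u := by
      intro u
      have hb := hmem_bdd u
      have e1 : (∫ v, (if v ≤ max (mtil u) 0 then (1:ℝ) else 0) ∂μ) = max (mtil u) 0 :=
        hIic _ (le_max_right _ _) (max_le hb.2 zero_le_one)
      have e0 : (∫ v, (if v ≤ max (-(mtil u)) 0 then (1:ℝ) else 0) ∂μ) = max (-(mtil u)) 0 :=
        hIic _ (le_max_right _ _) (max_le (by linarith [hb.1]) zero_le_one)
      have step : (∫ v, h (u, v) ∂μ)
          = (∫ v, ((if v ≤ max (mtil u) 0 then (1:ℝ) else 0)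
              - (if v ≤ max (-(mtil u)) 0 then (1:ℝ) else 0)) ∂μ) * A.indicator 1 u := by
        rw [← MeasureTheory.integral_mul_const]
      rw [step, integral_sub (hii _) (hii _), e1, e0,
        max_zero_sub_max_neg_zero_eq_self]
    have houter : (∫ u, mtil u * A.indicator 1 u ∂μ)
        = ∫ u in A ∩ Set.Icc (0:ℝ) 1, mtil u := by
      have hfe : (fun u => mtil u * A.indicator 1 u) = A.indicator mtil := by
        funext u; by_cases hu : u ∈ A <;> simp [Set.indicator_apply, hu]
      rw [hfe, MeasureTheory.integral_indicator hA, hμ,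
        Measure.restrict_restrict hA]
    rw [hRHS, MeasureTheory.integral_prod h hint]
    simp_rw [hinner]
    rw [houter]
  · -- (vi)
    exact hmtil_eq
  · -- (vii)
    intro z hz
    have hcontm : ContinuousAt mtil (Ptil z) := (key z hz).2
    have hii2 : IntervalIntegrable mtil volume 0 (Ptil z) := by
      refine (_root_.intervalIntegrable_const (c := (1:ℝ))).mono_fun'
        hmtil_meas.aestronglyMeasurable.restrict
        (Filter.Eventually.of_forall fun x => ?_)
      have hb := hmem_bdd x
      show ‖mtil x‖ ≤ 1
      rw [Real.norm_eq_abs, abs_le]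
      exact ⟨hb.1, hb.2⟩
    have hmaf : StronglyMeasurableAtFilter mtil (𝓝 (Ptil z)) volume :=
      hmtil_meas.stronglyMeasurable.stronglyMeasurableAtFilter
    have hF : HasDerivAt (fun p => ∫ u in (0:ℝ)..p, mtil u) (mtil (Ptil z)) (Ptil z) :=
      intervalIntegral.integral_hasDerivAt_right hii2 hmaf hcontm
    have hchain := (hF.comp z (hPtilD z hz)).const_add (∫ ω, y0 ω.2 ∂P)
    have hval : mtil (Ptil z) * (a z * PT' z) = f z * PT' z := by
      rw [hmtil_eq z hz, hθtil z]
      field_simp [hane z hz]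
    rw [← hval]
    exact hchain
end

section
/- Corollary F.1 (identifying the sign of the LATE). In the binary-instrument selection model, let T be a {0,1}-valued random variable on the same probability space and set ΔT := P[T = 1 | Z = 1] − P[T = 1 | Z = 0]. If ΔT > 0, then the sign of β equals the sign of ΔY/ΔT: β > 0 if and only if ΔY/ΔT > 0, β = 0 if and only if ΔY/ΔT = 0, and β < 0 if and only if ΔY/ΔT < 0. -/
open MeasureTheory ProbabilityTheory

/-- Auxiliary: integral of `Y` against the conditional measure on `A` equals the
unconditional integral of `g`, provided `Y = g` on `A` and the indicator of `A`
is independent of `g`. -/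
lemma stmt11_cond_integral_eq {Ω : Type*} [MeasurableSpace Ω] (P : Measure Ω)
    [IsProbabilityMeasure P] {A : Set Ω} (hAm : MeasurableSet A) (hA0 : P A ≠ 0)
    {Y g : Ω → ℝ} (hg : AEStronglyMeasurable g P)
    (hYg : ∀ ω ∈ A, Y ω = g ω)
    (hind : IndepFun (A.indicator (fun _ => (1:ℝ))) g P) :
    ∫ ω, Y ω ∂(ProbabilityTheory.cond P A) = ∫ ω, g ω ∂P := by
  have hfin : P A ≠ ⊤ := measure_ne_top _ _
  rw [ProbabilityTheory.cond, integral_smul_measure]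
  have h1 : ∫ ω in A, Y ω ∂P = ∫ ω in A, g ω ∂P := setIntegral_congr_fun hAm hYg
  have h2 : ∫ ω in A, g ω ∂P = ∫ ω, (A.indicator (fun _ => (1:ℝ)) ω) * g ω ∂P := by
    rw [← integral_indicator hAm]
    congr 1; ext ω
    by_cases h : ω ∈ A <;> simp [h]
  have h3 := hind.integral_fun_mul_eq_mul_integral ((measurable_const.indicator hAm).aestronglyMeasurable) hg
  have h4 : ∫ ω, A.indicator (fun _ => (1:ℝ)) ω ∂P = (P A).toReal := by
    rw [integral_indicator hAm]; simp [measureReal_def]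
  rw [h1, h2, h3, h4, ENNReal.toReal_inv, smul_eq_mul]
  have : (P A).toReal ≠ 0 := ENNReal.toReal_ne_zero.mpr ⟨hA0, hfin⟩
  field_simp

/-- **Corollary F.1, identifying the sign of the LATE.**
In the binary-instrument selection model, with `T` a `{0,1}`-valued random variable and
`ΔT = P[T = 1 | Z = 1] − P[T = 1 | Z = 0] > 0`, the sign of the LATE
`β = E[Y₁ − Y₀ | p₀ < U ≤ p₁]` equals the sign of `ΔY/ΔT`. -/
theorem stmt_11
    {Ω : Type*} [MeasurableSpace Ω] (P : Measure Ω) [IsProbabilityMeasure P]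
    (Z U Y0 Y1 : Ω → ℝ)
    (hZm : Measurable Z) (hUm : Measurable U) (hY0m : Measurable Y0) (hY1m : Measurable Y1)
    (hZ01 : ∀ ω, Z ω = 0 ∨ Z ω = 1)
    (hZpos : 0 < P (Z ⁻¹' {1})) (hZlt : P (Z ⁻¹' {1}) < 1)
    (hindep : IndepFun Z (fun ω => (Y0 ω, Y1 ω, U ω)) P)
    (hUnif : Measure.map U P = volume.restrict (Set.Icc (0:ℝ) 1))
    (hY0int : Integrable Y0 P) (hY1int : Integrable Y1 P)
    (p0 p1 : ℝ) (hp0 : p0 ∈ Set.Icc (0:ℝ) 1) (hp1 : p1 ∈ Set.Icc (0:ℝ) 1) (hp01 : p0 < p1)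
    (D : Ω → ℝ)
    (hD : ∀ ω, D ω = if Z ω = 1 then (if U ω ≤ p1 then 1 else 0)
                     else (if U ω ≤ p0 then 1 else 0))
    (Y : Ω → ℝ) (hY : ∀ ω, Y ω = D ω * Y1 ω + (1 - D ω) * Y0 ω)
    (T : Ω → ℝ) (hTm : Measurable T) (hT01 : ∀ ω, T ω = 0 ∨ T ω = 1)
    (ΔT : ℝ)
    (hΔT : ΔT = ((ProbabilityTheory.cond P (Z ⁻¹' {1})) (T ⁻¹' {1})).toReal
        - ((ProbabilityTheory.cond P (Z ⁻¹' {0})) (T ⁻¹' {1})).toReal)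
    (hΔTpos : 0 < ΔT)
    (ΔY : ℝ)
    (hΔY : ΔY = (∫ ω, Y ω ∂(ProbabilityTheory.cond P (Z ⁻¹' {1})))
        - ∫ ω, Y ω ∂(ProbabilityTheory.cond P (Z ⁻¹' {0})))
    (β : ℝ)
    (hβ : β = ∫ ω, (Y1 ω - Y0 ω) ∂(ProbabilityTheory.cond P {ω | p0 < U ω ∧ U ω ≤ p1})) :
    (0 < β ↔ 0 < ΔY / ΔT) ∧ (β = 0 ↔ ΔY / ΔT = 0) ∧ (β < 0 ↔ ΔY / ΔT < 0) := by
  classical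
  -- the joint random variable
  set W : Ω → ℝ × ℝ × ℝ := fun ω => (Y0 ω, Y1 ω, U ω) with hW
  have hWm : Measurable W := hY0m.prodMk (hY1m.prodMk hUm)
  -- the two "potential outcome" functions
  set g1 : Ω → ℝ := fun ω => Y0 ω + (if U ω ≤ p1 then (1:ℝ) else 0) * (Y1 ω - Y0 ω) with hg1
  set g0 : Ω → ℝ := fun ω => Y0 ω + (if U ω ≤ p0 then (1:ℝ) else 0) * (Y1 ω - Y0 ω) with hg0
  -- the G maps on the target space
  have hGmeas : ∀ p : ℝ, Measurable (fun q : ℝ × ℝ × ℝ =>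
      q.1 + (if q.2.2 ≤ p then (1:ℝ) else 0) * (q.2.1 - q.1)) := by
    intro p
    apply measurable_fst.add
    apply Measurable.mul
    · exact Measurable.ite (measurableSet_le (measurable_snd.snd) measurable_const)
        measurable_const measurable_const
    · exact measurable_snd.fst.sub measurable_fst
  have hg1m : Measurable g1 := (hGmeas p1).comp hWm
  have hg0m : Measurable g0 := (hGmeas p0).comp hWm
  have hg1int : Integrable g1 P := by
    have : Integrable (fun ω => (if U ω ≤ p1 then (1:ℝ) else 0) * (Y1 ω - Y0 ω)) P := by
      have := (hY1int.sub hY0int).indicator (hUm measurableSet_Iic (t := Set.Iic p1))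
      apply this.congr
      filter_upwards with ω
      by_cases h : U ω ≤ p1 <;> simp [Set.indicator, h]
    exact hY0int.add this
  have hg0int : Integrable g0 P := by
    have : Integrable (fun ω => (if U ω ≤ p0 then (1:ℝ) else 0) * (Y1 ω - Y0 ω)) P := by
      have := (hY1int.sub hY0int).indicator (hUm measurableSet_Iic (t := Set.Iic p0))
      apply this.congr
      filter_upwards with ω
      by_cases h : U ω ≤ p0 <;> simp [Set.indicator, h]
    exact hY0int.add this
  -- sets
  have hA1m : MeasurableSet (Z ⁻¹' {1}) := hZm (measurableSet_singleton 1)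
  have hA0m : MeasurableSet (Z ⁻¹' {0}) := hZm (measurableSet_singleton 0)
  have hA1ne : P (Z ⁻¹' {1}) ≠ 0 := hZpos.ne'
  have hA0ne : P (Z ⁻¹' {0}) ≠ 0 := by
    intro h
    have hcover : (Set.univ : Set Ω) ⊆ Z ⁻¹' {0} ∪ Z ⁻¹' {1} := by
      intro ω _
      rcases hZ01 ω with h1 | h1 <;> simp [h1]
    have : (1 : ENNReal) ≤ P (Z ⁻¹' {0}) + P (Z ⁻¹' {1}) := by
      calc (1:ENNReal) = P Set.univ := (measure_univ).symm
      _ ≤ P (Z ⁻¹' {0} ∪ Z ⁻¹' {1}) := measure_mono hcover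
      _ ≤ P (Z ⁻¹' {0}) + P (Z ⁻¹' {1}) := measure_union_le _ _
    rw [h, zero_add] at this
    exact absurd this (not_le.mpr hZlt)
  -- independence of indicators with g's
  have hindic : ∀ (c : ℝ) (p : ℝ), IndepFun ((Z ⁻¹' {c}).indicator (fun _ => (1:ℝ)))
      (fun ω => (W ω).1 + (if (W ω).2.2 ≤ p then (1:ℝ) else 0) * ((W ω).2.1 - (W ω).1)) P := by
    intro c p
    have hφ : Measurable (fun z : ℝ => ({c} : Set ℝ).indicator (fun _ => (1:ℝ)) z) :=
      measurable_const.indicator (measurableSet_singleton c)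
    have := hindep.comp hφ (hGmeas p)
    apply this.congr _ (Filter.EventuallyEq.refl _ _)
    filter_upwards with ω
    simp [Function.comp, Set.indicator]
  -- evaluate the two conditional integrals
  have hE1 : ∫ ω, Y ω ∂(ProbabilityTheory.cond P (Z ⁻¹' {1})) = ∫ ω, g1 ω ∂P := by
    apply stmt11_cond_integral_eq P hA1m hA1ne hg1m.aestronglyMeasurable
    · intro ω hω
      have hz : Z ω = 1 := hω
      rw [hY, hD, if_pos hz, hg1]
      by_cases h : U ω ≤ p1 <;> simp [h] <;> ring
    · exact hindic 1 p1
  have hE0 : ∫ ω, Y ω ∂(ProbabilityTheory.cond P (Z ⁻¹' {0})) = ∫ ω, g0 ω ∂P := by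
    apply stmt11_cond_integral_eq P hA0m hA0ne hg0m.aestronglyMeasurable
    · intro ω hω
      have hz : Z ω = 0 := hω
      have hz' : Z ω ≠ 1 := by rw [hz]; norm_num
      rw [hY, hD, if_neg hz', hg0]
      by_cases h : U ω ≤ p0 <;> simp [h] <;> ring
    · exact hindic 0 p0
  -- the compliers set
  set B : Set Ω := {ω | p0 < U ω ∧ U ω ≤ p1} with hB
  have hBeq : B = U ⁻¹' (Set.Ioc p0 p1) := rfl
  have hBm : MeasurableSet B := hUm measurableSet_Ioc
  have hPB : P B = ENNReal.ofReal (p1 - p0) := by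
    rw [hBeq, ← Measure.map_apply hUm measurableSet_Ioc, hUnif,
      Measure.restrict_apply measurableSet_Ioc]
    have : Set.Ioc p0 p1 ∩ Set.Icc (0:ℝ) 1 = Set.Ioc p0 p1 := by
      apply Set.inter_eq_self_of_subset_left
      intro x hx
      exact ⟨le_trans hp0.1 (le_of_lt hx.1), le_trans hx.2 hp1.2⟩
    rw [this, Real.volume_Ioc]
  have hp10 : (0:ℝ) < p1 - p0 := sub_pos.mpr hp01
  -- ΔY as an integral over the compliers
  have hdiff : ∫ ω, g1 ω ∂P - ∫ ω, g0 ω ∂P = ∫ ω in B, (Y1 ω - Y0 ω) ∂P := by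
    rw [← integral_sub hg1int hg0int, ← integral_indicator hBm]
    congr 1; ext ω
    by_cases hb : ω ∈ B
    · have h1 : U ω ≤ p1 := hb.2
      have h0 : ¬ U ω ≤ p0 := not_le.mpr hb.1
      simp [hg1, hg0, h1, h0, Set.indicator, hb]
    · have : (U ω ≤ p1 ∧ U ω ≤ p0) ∨ (¬ U ω ≤ p1 ∧ ¬ U ω ≤ p0) := by
        by_cases h1 : U ω ≤ p1
        · left; refine ⟨h1, ?_⟩
          by_contra h0
          exact hb ⟨not_le.mp h0, h1⟩
        · right; exact ⟨h1, fun h0 => h1 (le_trans h0 hp01.le)⟩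
      rcases this with ⟨h1, h0⟩ | ⟨h1, h0⟩ <;> simp [hg1, hg0, h1, h0, Set.indicator, hb]
  -- evaluate β
  have hβval : β = (p1 - p0)⁻¹ * ∫ ω in B, (Y1 ω - Y0 ω) ∂P := by
    rw [hβ, ProbabilityTheory.cond, integral_smul_measure, hPB, ENNReal.toReal_inv,
      ENNReal.toReal_ofReal hp10.le, smul_eq_mul]
  -- key identity
  have hkey : ΔY = (p1 - p0) * β := by
    rw [hΔY, hE1, hE0, hdiff, hβval]
    field_simp
  -- conclusion
  have hcoef : 0 < (p1 - p0) / ΔT := div_pos hp10 hΔTpos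
  have hrw : ΔY / ΔT = ((p1 - p0) / ΔT) * β := by
    rw [hkey]; ring
  rw [hrw]
  refine ⟨?_, ?_, ?_⟩
  · constructor
    · intro h; exact mul_pos hcoef h
    · intro h; nlinarith
  · constructor
    · intro h; rw [h, mul_zero]
    · intro h
      rcases mul_eq_zero.mp h with h' | h'
      · exact absurd h' hcoef.ne'
      · exact h'
  · constructor
    · intro h; exact mul_neg_of_pos_of_neg hcoef h
    · intro h; nlinarith
end

section
/- Corollary F.2 (bounds for the LATE). In the binary-instrument selection model, let T be a {0,1}-valued random variable on the same probability space, set ΔT := P[T = 1 | Z = 1] − P[T = 1 | Z = 0] and ΔD := p₁ − p₀, and suppose ΔT ≠ 0 and ΔD/ΔT ∈ [1/c, c] for some c ∈ [1, ∞). Then: if ΔY/ΔT > 0, then (1/c)·(ΔY/ΔT) ≤ β ≤ c·(ΔY/ΔT); if ΔY/ΔT = 0, then β = 0; and if ΔY/ΔT < 0, then c·(ΔY/ΔT) ≤ β ≤ (1/c)·(ΔY/ΔT). -/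
open MeasureTheory ProbabilityTheory

lemma aux_indep_setIntegral {Ω : Type*} [MeasurableSpace Ω] (P : Measure Ω)
    [IsProbabilityMeasure P]
    {Z g : Ω → ℝ} (z : ℝ) (hZm : Measurable Z)
    (h : IndepFun (fun ω => if Z ω = z then (1:ℝ) else 0) g P)
    (hg : AEStronglyMeasurable g P) :
    ∫ ω in Z ⁻¹' {z}, g ω ∂P = (P (Z ⁻¹' {z})).toReal * ∫ ω, g ω ∂P := by
  have hs : MeasurableSet (Z ⁻¹' {z}) := hZm (measurableSet_singleton z)
  have h1 : ∫ ω in Z ⁻¹' {z}, g ω ∂P = ∫ ω, (if Z ω = z then (1:ℝ) else 0) * g ω ∂P := by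
    rw [← integral_indicator hs]
    congr 1; funext ω
    by_cases hω : Z ω = z <;> simp [Set.indicator_apply, hω]
  have h2 := h.integral_fun_mul_eq_mul_integral (by
    refine (Measurable.ite ?_ measurable_const measurable_const).aestronglyMeasurable
    exact hZm (measurableSet_singleton z)) hg
  have h3 : ∫ ω, (if Z ω = z then (1:ℝ) else 0) ∂P = (P (Z ⁻¹' {z})).toReal := by
    have : (fun ω => if Z ω = z then (1:ℝ) else 0) = (Z ⁻¹' {z}).indicator (fun _ => (1:ℝ)) := by
      funext ω; by_cases hω : Z ω = z <;> simp [Set.indicator_apply, hω]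
    rw [this, integral_indicator_const _ hs]; simp [Measure.real]
  rw [h1, ← h3] at *; exact h2

lemma aux_cond_integral {Ω : Type*} [MeasurableSpace Ω] (P : Measure Ω)
    {s : Set Ω} (hs : MeasurableSet s) (f : Ω → ℝ) :
    ∫ ω, f ω ∂(ProbabilityTheory.cond P s) = (P s)⁻¹.toReal * ∫ ω in s, f ω ∂P := by
  rw [ProbabilityTheory.cond, integral_smul_measure]
  rfl

/-- **Corollary F.2, bounds for the LATE.**
In the binary-instrument selection model, with `T` a `{0,1}`-valued random variable,
`ΔT = P[T = 1 | Z = 1] − P[T = 1 | Z = 0] ≠ 0`, `ΔD = p₁ − p₀`, and `ΔD/ΔT ∈ [1/c, c]`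
for some `c ≥ 1`: if `ΔY/ΔT > 0` then `(1/c)·(ΔY/ΔT) ≤ β ≤ c·(ΔY/ΔT)`; if `ΔY/ΔT = 0` then
`β = 0`; and if `ΔY/ΔT < 0` then `c·(ΔY/ΔT) ≤ β ≤ (1/c)·(ΔY/ΔT)`. -/
theorem stmt_12
    {Ω : Type*} [MeasurableSpace Ω] (P : Measure Ω) [IsProbabilityMeasure P]
    (Z U Y0 Y1 : Ω → ℝ)
    (hZm : Measurable Z) (hUm : Measurable U) (hY0m : Measurable Y0) (hY1m : Measurable Y1)
    (hZ01 : ∀ ω, Z ω = 0 ∨ Z ω = 1)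
    (hZpos : 0 < P (Z ⁻¹' {1})) (hZlt : P (Z ⁻¹' {1}) < 1)
    (hindep : IndepFun Z (fun ω => (Y0 ω, Y1 ω, U ω)) P)
    (hUnif : Measure.map U P = volume.restrict (Set.Icc (0:ℝ) 1))
    (hY0int : Integrable Y0 P) (hY1int : Integrable Y1 P)
    (p0 p1 : ℝ) (hp0 : p0 ∈ Set.Icc (0:ℝ) 1) (hp1 : p1 ∈ Set.Icc (0:ℝ) 1) (hp01 : p0 < p1)
    (D : Ω → ℝ)
    (hD : ∀ ω, D ω = if Z ω = 1 then (if U ω ≤ p1 then 1 else 0)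
                     else (if U ω ≤ p0 then 1 else 0))
    (Y : Ω → ℝ) (hY : ∀ ω, Y ω = D ω * Y1 ω + (1 - D ω) * Y0 ω)
    (T : Ω → ℝ) (hTm : Measurable T) (hT01 : ∀ ω, T ω = 0 ∨ T ω = 1)
    (ΔT : ℝ)
    (hΔT : ΔT = ((ProbabilityTheory.cond P (Z ⁻¹' {1})) (T ⁻¹' {1})).toReal
        - ((ProbabilityTheory.cond P (Z ⁻¹' {0})) (T ⁻¹' {1})).toReal)
    (hΔTne : ΔT ≠ 0)
    (c : ℝ) (hc : 1 ≤ c)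
    (hratio : (p1 - p0) / ΔT ∈ Set.Icc (1 / c) c)
    (ΔY : ℝ)
    (hΔY : ΔY = (∫ ω, Y ω ∂(ProbabilityTheory.cond P (Z ⁻¹' {1})))
        - ∫ ω, Y ω ∂(ProbabilityTheory.cond P (Z ⁻¹' {0})))
    (β : ℝ)
    (hβ : β = ∫ ω, (Y1 ω - Y0 ω) ∂(ProbabilityTheory.cond P {ω | p0 < U ω ∧ U ω ≤ p1})) :
    (0 < ΔY / ΔT → (1 / c) * (ΔY / ΔT) ≤ β ∧ β ≤ c * (ΔY / ΔT)) ∧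
    (ΔY / ΔT = 0 → β = 0) ∧
    (ΔY / ΔT < 0 → c * (ΔY / ΔT) ≤ β ∧ β ≤ (1 / c) * (ΔY / ΔT)) := by
  -- measurable sets
  have hs1 : MeasurableSet (Z ⁻¹' {1}) := hZm (measurableSet_singleton 1)
  have hs0 : MeasurableSet (Z ⁻¹' {0}) := hZm (measurableSet_singleton 0)
  -- the two compositions
  set g1 : Ω → ℝ := fun ω => Y0 ω + (if U ω ≤ p1 then (1:ℝ) else 0) * (Y1 ω - Y0 ω) with hg1def
  set g0 : Ω → ℝ := fun ω => Y0 ω + (if U ω ≤ p0 then (1:ℝ) else 0) * (Y1 ω - Y0 ω) with hg0def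
  have hψm : ∀ p : ℝ, Measurable (fun w : ℝ × ℝ × ℝ =>
      w.1 + (if w.2.2 ≤ p then (1:ℝ) else 0) * (w.2.1 - w.1)) := by
    intro p
    refine measurable_fst.add (Measurable.mul ?_ (measurable_snd.fst.sub measurable_fst))
    exact Measurable.ite (measurableSet_le (measurable_snd.snd) measurable_const)
      measurable_const measurable_const
  have hφm : ∀ z : ℝ, Measurable (fun x : ℝ => if x = z then (1:ℝ) else 0) := by
    intro z
    exact Measurable.ite (measurableSet_eq) measurable_const measurable_const
  have hWm : Measurable (fun ω => (Y0 ω, Y1 ω, U ω)) :=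
    hY0m.prodMk (hY1m.prodMk hUm)
  have hg1m : Measurable g1 := (hψm p1).comp hWm
  have hg0m : Measurable g0 := (hψm p0).comp hWm
  -- integrability
  have hintind : ∀ p : ℝ, Integrable
      (fun ω => (if U ω ≤ p then (1:ℝ) else 0) * (Y1 ω - Y0 ω)) P := by
    intro p
    have : (fun ω => (if U ω ≤ p then (1:ℝ) else 0) * (Y1 ω - Y0 ω))
        = (U ⁻¹' Set.Iic p).indicator (fun ω => Y1 ω - Y0 ω) := by
      funext ω; by_cases hω : U ω ≤ p <;> simp [Set.indicator_apply, hω]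
    rw [this]
    exact (hY1int.sub hY0int).indicator (hUm measurableSet_Iic)
  have hg1int : Integrable g1 P := hY0int.add (hintind p1)
  have hg0int : Integrable g0 P := hY0int.add (hintind p0)
  -- independence of indicator of Z and g's
  have hig1 : ∀ z : ℝ, IndepFun (fun ω => if Z ω = z then (1:ℝ) else 0) g1 P :=
    fun z => hindep.comp (hφm z) (hψm p1)
  have hig0 : ∀ z : ℝ, IndepFun (fun ω => if Z ω = z then (1:ℝ) else 0) g0 P :=
    fun z => hindep.comp (hφm z) (hψm p0)
  -- conditional expectations identify
  have hPfin : ∀ s : Set Ω, P s ≠ ⊤ := fun s => (measure_lt_top P s).ne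
  have hP0pos : 0 < P (Z ⁻¹' {0}) := by
    have hcompl : Z ⁻¹' {0} = (Z ⁻¹' {1})ᶜ := by
      ext ω
      rcases hZ01 ω with h | h <;> simp [h]
    rw [hcompl, measure_compl hs1 (hPfin _)]
    simpa [measure_univ] using hZlt
  have key : ∀ (z : ℝ) (g : Ω → ℝ), 0 < P (Z ⁻¹' {z}) →
      IndepFun (fun ω => if Z ω = z then (1:ℝ) else 0) g P → Measurable g →
      (∀ ω ∈ Z ⁻¹' {z}, Y ω = g ω) →
      ∫ ω, Y ω ∂(ProbabilityTheory.cond P (Z ⁻¹' {z})) = ∫ ω, g ω ∂P := by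
    intro z g hpos hind hgm heq
    have hsz : MeasurableSet (Z ⁻¹' {z}) := hZm (measurableSet_singleton z)
    rw [aux_cond_integral P hsz]
    rw [setIntegral_congr_fun hsz heq]
    rw [aux_indep_setIntegral P z hZm hind hgm.aestronglyMeasurable]
    rw [← mul_assoc, ENNReal.toReal_inv,
      inv_mul_cancel₀ (by
        simp [ENNReal.toReal_ne_zero, hpos.ne', hPfin]), one_mul]
  have hE1 : ∫ ω, Y ω ∂(ProbabilityTheory.cond P (Z ⁻¹' {1})) = ∫ ω, g1 ω ∂P := by
    refine key 1 g1 hZpos (hig1 1) hg1m ?_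
    intro ω hω
    simp only [Set.mem_preimage, Set.mem_singleton_iff] at hω
    rw [hY ω, hD ω, if_pos hω]
    by_cases h : U ω ≤ p1 <;> simp [hg1def, h] <;> ring
  have hE0 : ∫ ω, Y ω ∂(ProbabilityTheory.cond P (Z ⁻¹' {0})) = ∫ ω, g0 ω ∂P := by
    refine key 0 g0 hP0pos (hig0 0) hg0m ?_
    intro ω hω
    simp only [Set.mem_preimage, Set.mem_singleton_iff] at hω
    have hne : Z ω ≠ 1 := by rw [hω]; norm_num
    rw [hY ω, hD ω, if_neg hne]
    by_cases h : U ω ≤ p0 <;> simp [hg0def, h] <;> ring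
  -- ΔY as integral of indicator difference
  have hΔY' : ΔY = ∫ ω, (if p0 < U ω ∧ U ω ≤ p1 then (1:ℝ) else 0) * (Y1 ω - Y0 ω) ∂P := by
    rw [hΔY, hE1, hE0, ← integral_sub hg1int hg0int]
    congr 1; funext ω
    simp only [hg1def, hg0def]
    by_cases h1 : U ω ≤ p1 <;> by_cases h0 : U ω ≤ p0
    · simp [h1, h0, not_lt.mpr h0]
    · simp [h1, h0, not_le.mp h0]
    · exact absurd (h0.trans hp01.le) h1
    · simp [h1, h0, fun h : p0 < U ω ∧ U ω ≤ p1 => h1 h.2]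
  -- the conditioning set and its measure
  have hSset : {ω | p0 < U ω ∧ U ω ≤ p1} = U ⁻¹' Set.Ioc p0 p1 := by
    ext ω; simp [Set.mem_Ioc]
  have hSmeas : MeasurableSet (U ⁻¹' Set.Ioc p0 p1) := hUm measurableSet_Ioc
  have hPS : P (U ⁻¹' Set.Ioc p0 p1) = ENNReal.ofReal (p1 - p0) := by
    rw [← Measure.map_apply hUm measurableSet_Ioc, hUnif,
      Measure.restrict_apply measurableSet_Ioc]
    have hsub : Set.Ioc p0 p1 ∩ Set.Icc (0:ℝ) 1 = Set.Ioc p0 p1 := by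
      refine Set.inter_eq_left.mpr fun x hx => ⟨(hp0.1.trans hx.1.le), hx.2.trans hp1.2⟩
    rw [hsub, Real.volume_Ioc]
  -- β identification
  have hkey : ΔY = (p1 - p0) * β := by
    have hβ' : β = (p1 - p0)⁻¹ * ΔY := by
      rw [hβ, hSset, aux_cond_integral P hSmeas, hPS, ← ENNReal.ofReal_inv_of_pos (by linarith),
        ENNReal.toReal_ofReal (inv_nonneg.mpr (by linarith))]
      congr 1
      rw [hΔY', ← integral_indicator hSmeas]
      congr 1; funext ω
      by_cases h : p0 < U ω ∧ U ω ≤ p1 <;> simp [Set.indicator_apply, h]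
    rw [hβ']
    have hne : p1 - p0 ≠ 0 := by linarith
    field_simp
  -- final algebra
  have hc0 : 0 < c := lt_of_lt_of_le one_pos hc
  obtain ⟨hr1, hr2⟩ := hratio
  set r := (p1 - p0) / ΔT with hrdef
  have hrpos : 0 < r := lt_of_lt_of_le (by positivity) hr1
  have hx : ΔY / ΔT = β * r := by
    rw [hkey, hrdef]; ring
  have hcinv : (0:ℝ) < 1/c := by positivity
  have hb : 1/c * (β * c) = β := by field_simp
  have hb2 : c * (β * (1/c)) = β := by field_simp
  refine ⟨fun hpos => ?_, fun hzero => ?_, fun hneg => ?_⟩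
  · have hβpos : 0 < β := by
      rcases lt_trichotomy β 0 with h | h | h
      · nlinarith
      · rw [hx, h] at hpos; simp at hpos
      · exact h
    constructor
    · have e := mul_le_mul_of_nonneg_left
        (mul_le_mul_of_nonneg_left hr2 hβpos.le) hcinv.le
      rw [hx]; linarith
    · have e := mul_le_mul_of_nonneg_left
        (mul_le_mul_of_nonneg_left hr1 hβpos.le) hc0.le
      rw [hx]; linarith
  · rw [hx] at hzero
    exact (mul_eq_zero.mp hzero).resolve_right hrpos.ne'
  · have hβneg : β < 0 := by
      rcases lt_trichotomy β 0 with h | h | h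
      · exact h
      · rw [hx, h] at hneg; simp at hneg
      · nlinarith
    constructor
    · have e := mul_le_mul_of_nonneg_left
        (mul_le_mul_of_nonpos_left hr1 hβneg.le) hc0.le
      rw [hx]; linarith
    · have e := mul_le_mul_of_nonneg_left
        (mul_le_mul_of_nonpos_left hr2 hβneg.le) hcinv.le
      rw [hx]; linarith
end

section
/- Proposition F.2 (sharp identified set for the LATE, binary outcome). Let 0 ≤ p₀ < p₁ ≤ 1 with p₁ > 0, let q ∈ (0,1), let ΔY ∈ ℝ, let c ∈ [1, 1/p₁], let a ∈ [1/c, c], and set β̃ := (1/a)·ΔY/(p₁ − p₀); assume −1 ≤ β̃ ≤ 1. Then there exist a probability space carrying random variables Z, Ũ, Ỹ₀, Ỹ₁ such that: (i) Z takes values in {0,1} with P(Z = 1) = q; (ii) Ũ is uniformly distributed on [0,1]; (iii) Z is independent of (Ỹ₀, Ỹ₁, Ũ); (iv) Ỹ₀, Ỹ₁ take values in {0,1}; and, defining D̃ := 1{Ũ ≤ a·p₁} on {Z = 1} and D̃ := 1{Ũ ≤ a·p₀} on {Z = 0}, and Ỹ := D̃·Ỹ₁ + (1 − D̃)·Ỹ₀: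 (v) E[Ỹ₁ − Ỹ₀ | a·p₀ < Ũ ≤ a·p₁] = β̃; and (vi) E[Ỹ | Z = 1] − E[Ỹ | Z = 0] = ΔY. -/
open MeasureTheory ProbabilityTheory

lemma aux_indep_fst_snd {α β : Type*} [MeasurableSpace α] [MeasurableSpace β]
    (μ : Measure α) (ν : Measure β) [IsProbabilityMeasure μ] [IsProbabilityMeasure ν] :
    IndepFun (Prod.fst : α × β → α) (Prod.snd : α × β → β) (μ.prod ν) := by
  rw [indepFun_iff_measure_inter_preimage_eq_mul]
  intro s t hs ht
  have h1 : (Prod.fst ⁻¹' s : Set (α × β)) ∩ Prod.snd ⁻¹' t = s ×ˢ t := by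
    ext ⟨x, y⟩; simp [Set.mem_prod]
  have h2 : (Prod.fst ⁻¹' s : Set (α × β)) = s ×ˢ Set.univ := by
    ext ⟨x, y⟩; simp
  have h3 : (Prod.snd ⁻¹' t : Set (α × β)) = Set.univ ×ˢ t := by
    ext ⟨x, y⟩; simp
  rw [h1, h2, h3, Measure.prod_prod, Measure.prod_prod, Measure.prod_prod]
  simp [measure_univ]

lemma aux_smul_prod {α β : Type*} [MeasurableSpace α] [MeasurableSpace β]
    (r : ℝ) (x : α) (ν : Measure β) [SigmaFinite ν] :
    (ENNReal.ofReal r • Measure.dirac x).prod ν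
      = ENNReal.ofReal r • ((Measure.dirac x).prod ν) := by
  haveI : IsFiniteMeasure (ENNReal.ofReal r • Measure.dirac x : Measure α) := by
    constructor
    simp only [Measure.smul_apply, smul_eq_mul]
    exact ENNReal.mul_lt_top ENNReal.ofReal_lt_top (measure_lt_top _ _)
  refine Measure.prod_eq fun s t hs ht => ?_
  simp only [Measure.smul_apply, Measure.prod_prod, smul_eq_mul]
  ring

set_option maxHeartbeats 1000000 in
/-- **Proposition F.2, sharp identified set for the LATE, binary outcome.**
Given `0 ≤ p₀ < p₁ ≤ 1` with `p₁ > 0`, `q ∈ (0,1)`, `ΔY ∈ ℝ`, `c ∈ [1, 1/p₁]`,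
`a ∈ [1/c, c]` and `β̃ = (1/a)·ΔY/(p₁ − p₀)` with `−1 ≤ β̃ ≤ 1`, there exists a probability
space carrying `Z, Ũ, Ỹ₀, Ỹ₁` satisfying conditions (i)–(vi). -/
theorem stmt_13
    (p0 p1 : ℝ) (hp0 : 0 ≤ p0) (hp01 : p0 < p1) (hp1 : p1 ≤ 1) (hp1pos : 0 < p1)
    (q : ℝ) (hq : q ∈ Set.Ioo (0:ℝ) 1)
    (ΔY : ℝ)
    (c : ℝ) (hc : c ∈ Set.Icc (1:ℝ) (1 / p1))
    (a : ℝ) (ha : a ∈ Set.Icc (1 / c) c)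
    (βtil : ℝ) (hβtil : βtil = (1 / a) * (ΔY / (p1 - p0)))
    (hβtil_bdd : βtil ∈ Set.Icc (-1 : ℝ) 1) :
    ∃ (Ω : Type) (_ : MeasurableSpace Ω) (P : Measure Ω) (_ : IsProbabilityMeasure P)
      (Z U Y0 Y1 D Y : Ω → ℝ),
      Measurable Z ∧ Measurable U ∧ Measurable Y0 ∧ Measurable Y1 ∧
      -- (i) Z takes values in {0,1} with P(Z = 1) = q
      (∀ ω, Z ω = 0 ∨ Z ω = 1) ∧ P (Z ⁻¹' {1}) = ENNReal.ofReal q ∧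
      -- (ii) Ũ is uniformly distributed on [0,1]
      Measure.map U P = volume.restrict (Set.Icc (0:ℝ) 1) ∧
      -- (iii) Z is independent of (Ỹ₀, Ỹ₁, Ũ)
      IndepFun Z (fun ω => (Y0 ω, Y1 ω, U ω)) P ∧
      -- (iv) Ỹ₀ and Ỹ₁ take values in {0,1}
      (∀ ω, Y0 ω = 0 ∨ Y0 ω = 1) ∧ (∀ ω, Y1 ω = 0 ∨ Y1 ω = 1) ∧
      -- definitions of D̃ and Ỹ
      (∀ ω, D ω = if Z ω = 1 then (if U ω ≤ a * p1 then 1 else 0)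
                  else (if U ω ≤ a * p0 then 1 else 0)) ∧
      (∀ ω, Y ω = D ω * Y1 ω + (1 - D ω) * Y0 ω) ∧
      -- (v) E[Ỹ₁ − Ỹ₀ | a·p₀ < Ũ ≤ a·p₁] = β̃
      (∫ ω, (Y1 ω - Y0 ω)
          ∂(ProbabilityTheory.cond P {ω | a * p0 < U ω ∧ U ω ≤ a * p1})) = βtil ∧
      -- (vi) E[Ỹ | Z = 1] − E[Ỹ | Z = 0] = ΔY
      (∫ ω, Y ω ∂(ProbabilityTheory.cond P (Z ⁻¹' {1})))
          - (∫ ω, Y ω ∂(ProbabilityTheory.cond P (Z ⁻¹' {0}))) = ΔY := by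
  classical
  obtain ⟨hq0, hq1⟩ := hq
  obtain ⟨hc1, hc2⟩ := hc
  obtain ⟨ha1, ha2⟩ := ha
  obtain ⟨hb1, hb2⟩ := hβtil_bdd
  have hcpos : (0:ℝ) < c := lt_of_lt_of_le one_pos hc1
  have hapos : (0:ℝ) < a := lt_of_lt_of_le (by positivity) ha1
  set L : ℝ := a * p0 with hLdef
  set R : ℝ := a * p1 with hRdef
  have hLR : L < R := mul_lt_mul_of_pos_left hp01 hapos
  have hL0 : 0 ≤ L := by positivity
  have hR1 : R ≤ 1 := by
    have h : a ≤ 1 / p1 := le_trans ha2 hc2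
    have h2 : a * p1 ≤ (1 / p1) * p1 := by nlinarith
    calc R ≤ (1 / p1) * p1 := h2
    _ = 1 := by field_simp
  set len : ℝ := R - L with hlendef
  have hlenpos : 0 < len := sub_pos.mpr hLR
  set t1 : ℝ := L + max βtil 0 * len with ht1def
  set t0 : ℝ := L + max (-βtil) 0 * len with ht0def
  have ht1L : L ≤ t1 := by nlinarith [le_max_right βtil 0]
  have ht0L : L ≤ t0 := by nlinarith [le_max_right (-βtil) 0]
  have ht1R : t1 ≤ R := by
    have : max βtil 0 ≤ 1 := max_le hb2 zero_le_one
    nlinarith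
  have ht0R : t0 ≤ R := by
    have : max (-βtil) 0 ≤ 1 := max_le (by linarith) zero_le_one
    nlinarith
  have hDY : ΔY = βtil * len := by
    have hlen : len = a * (p1 - p0) := by rw [hlendef, hRdef, hLdef]; ring
    have ha' : a ≠ 0 := ne_of_gt hapos
    have hp' : p1 - p0 ≠ 0 := ne_of_gt (sub_pos.mpr hp01)
    rw [hβtil, hlen]
    field_simp
  have hsubIcc : Set.Ioc L R ⊆ Set.Icc (0:ℝ) 1 := fun u hu => Set.mem_Icc.mpr
    ⟨le_of_lt (lt_of_le_of_lt hL0 (Set.mem_Ioc.mp hu).1),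
     le_trans (Set.mem_Ioc.mp hu).2 hR1⟩
  set f1 : ℝ → ℝ := fun u => if u ∈ Set.Ioc L t1 then 1 else 0 with hf1def
  set f0 : ℝ → ℝ := fun u => if u ∈ Set.Ioc L t0 then 1 else 0 with hf0def
  have hf1m : Measurable f1 := Measurable.ite measurableSet_Ioc measurable_const measurable_const
  have hf0m : Measurable f0 := Measurable.ite measurableSet_Ioc measurable_const measurable_const
  set μB : Measure Bool :=
    (ENNReal.ofReal (1 - q)) • Measure.dirac false + (ENNReal.ofReal q) • Measure.dirac true
    with hμBdef
  set μU : Measure ℝ := volume.restrict (Set.Icc 0 1) with hμUdef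
  haveI hμBprob : IsProbabilityMeasure μB := by
    constructor
    rw [hμBdef]
    simp only [Measure.add_apply, Measure.smul_apply, Measure.dirac_apply' _ MeasurableSet.univ,
      Set.mem_univ, Set.indicator_of_mem, Pi.one_apply, smul_eq_mul, mul_one]
    rw [← ENNReal.ofReal_add (by linarith) (by linarith)]
    norm_num
  haveI hμUprob : IsProbabilityMeasure μU := by
    constructor
    rw [hμUdef]
    simp [Real.volume_Icc]
  set P : Measure (Bool × ℝ) := μB.prod μU with hPdef
  haveI hPprob : IsProbabilityMeasure P := by rw [hPdef]; infer_instance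
  set Z : Bool × ℝ → ℝ := fun ω => if ω.1 then 1 else 0 with hZdef
  set U : Bool × ℝ → ℝ := fun ω => ω.2 with hUdef
  set Y0 : Bool × ℝ → ℝ := fun ω => f0 ω.2 with hY0def
  set Y1 : Bool × ℝ → ℝ := fun ω => f1 ω.2 with hY1def
  set D : Bool × ℝ → ℝ := fun ω => if Z ω = 1 then (if U ω ≤ R then 1 else 0)
                  else (if U ω ≤ L then 1 else 0) with hDdef
  set Y : Bool × ℝ → ℝ := fun ω => D ω * Y1 ω + (1 - D ω) * Y0 ω with hYdef
  have hZm : Measurable Z :=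
    (measurable_of_countable (fun b : Bool => if b then (1:ℝ) else 0)).comp measurable_fst
  have hUm : Measurable U := measurable_snd
  have hY0m : Measurable Y0 := hf0m.comp measurable_snd
  have hY1m : Measurable Y1 := hf1m.comp measurable_snd
  have hDm : Measurable D := by
    apply Measurable.ite (hZm (measurableSet_singleton 1))
    · exact Measurable.ite (measurable_snd measurableSet_Iic) measurable_const measurable_const
    · exact Measurable.ite (measurable_snd measurableSet_Iic) measurable_const measurable_const
  have hYm : Measurable Y := (hDm.mul hY1m).add ((measurable_const.sub hDm).mul hY0m)
  -- pointwise identities for Y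
  have hYtrue : ∀ u : ℝ, Y (true, u) = f1 u := by
    intro u
    simp only [hYdef, hDdef, hZdef, hUdef, hY0def, hY1def]
    norm_num
    by_cases h : u ≤ R
    · simp [h]
    · have h1 : f1 u = 0 := by
        rw [hf1def]; simp only [Set.mem_Ioc]
        rw [if_neg]; push_neg; intro _; linarith
      have h0 : f0 u = 0 := by
        rw [hf0def]; simp only [Set.mem_Ioc]
        rw [if_neg]; push_neg; intro _; linarith
      simp [h, h1, h0]
  have hYfalse : ∀ u : ℝ, Y (false, u) = f0 u := by
    intro u
    simp only [hYdef, hDdef, hZdef, hUdef, hY0def, hY1def]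
    norm_num
    by_cases h : u ≤ L
    · have h1 : f1 u = 0 := by
        rw [hf1def]; simp only [Set.mem_Ioc]
        rw [if_neg]; push_neg; intro h'; linarith
      have h0 : f0 u = 0 := by
        rw [hf0def]; simp only [Set.mem_Ioc]
        rw [if_neg]; push_neg; intro h'; linarith
      simp [h, h1, h0]
    · simp [h]
  -- integral helpers
  have hfin : IsFiniteMeasure (volume.restrict (Set.Ioc L R)) := by
    constructor
    rw [Measure.restrict_apply MeasurableSet.univ, Set.univ_inter, Real.volume_Ioc]
    exact ENNReal.ofReal_lt_top
  have hind : ∀ t : ℝ, (fun u => if u ∈ Set.Ioc L t then (1:ℝ) else 0)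
      = (Set.Ioc L t).indicator 1 := by
    intro t; ext u; simp [Set.indicator_apply]
  have hint : ∀ t : ℝ, Integrable (fun u => if u ∈ Set.Ioc L t then (1:ℝ) else 0)
      (volume.restrict (Set.Ioc L R)) := by
    intro t
    rw [hind t]
    exact (integrable_const 1).indicator measurableSet_Ioc
  have key : ∀ t : ℝ, L ≤ t → t ≤ R →
      ∫ u, (if u ∈ Set.Ioc L t then (1:ℝ) else 0) ∂(volume.restrict (Set.Ioc L R)) = t - L := by
    intro t h1 h2
    rw [hind t, integral_indicator_one measurableSet_Ioc, measureReal_def,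
      Measure.restrict_apply measurableSet_Ioc,
      Set.inter_eq_left.mpr (Set.Ioc_subset_Ioc_right h2), Real.volume_Ioc,
      ENNReal.toReal_ofReal (by linarith)]
  have keyU : ∀ t : ℝ, L ≤ t → t ≤ R →
      ∫ u, (if u ∈ Set.Ioc L t then (1:ℝ) else 0) ∂μU = t - L := by
    intro t h1 h2
    rw [hind t, integral_indicator_one measurableSet_Ioc, measureReal_def, hμUdef,
      Measure.restrict_apply measurableSet_Ioc,
      Set.inter_eq_left.mpr ((Set.Ioc_subset_Ioc_right h2).trans hsubIcc), Real.volume_Ioc,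
      ENNReal.toReal_ofReal (by linarith)]
  refine ⟨Bool × ℝ, inferInstance, P, hPprob, Z, U, Y0, Y1, D, Y,
    hZm, hUm, hY0m, hY1m, ?_, ?_, ?_, ?_, ?_, ?_, fun ω => rfl, fun ω => rfl, ?_, ?_⟩
  · intro ω; by_cases h : ω.1 <;> simp [hZdef, h]
  · -- P (Z⁻¹' {1}) = q
    have hset : Z ⁻¹' {1} = ({true} : Set Bool) ×ˢ (Set.univ : Set ℝ) := by
      ext ⟨b, u⟩
      cases b <;> simp [hZdef]
    rw [hset, hPdef, Measure.prod_prod, measure_univ, mul_one, hμBdef]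
    simp [Measure.dirac_apply]
  · -- map U P = uniform
    rw [hPdef, hUdef]
    rw [show (fun ω : Bool × ℝ => ω.2) = Prod.snd from rfl, Measure.map_snd_prod,
      measure_univ, one_smul, hμUdef]
  · -- independence
    exact (aux_indep_fst_snd μB μU).comp (φ := fun b : Bool => if b then (1:ℝ) else 0)
      (ψ := fun u : ℝ => (f0 u, f1 u, u))
      (measurable_of_countable _) (hf0m.prodMk (hf1m.prodMk measurable_id))
  · intro ω
    by_cases h : ω.2 ∈ Set.Ioc L t0
    · right; exact if_pos h
    · left; exact if_neg h
  · intro ω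
    by_cases h : ω.2 ∈ Set.Ioc L t1
    · right; exact if_pos h
    · left; exact if_neg h
  · -- (v)
    have hSeq : {ω : Bool × ℝ | L < U ω ∧ U ω ≤ R}
        = (Set.univ : Set Bool) ×ˢ Set.Ioc L R := by
      ext ⟨b, u⟩; simp [hUdef, Set.mem_Ioc]
    rw [hSeq]
    have hrestr : P.restrict ((Set.univ : Set Bool) ×ˢ Set.Ioc L R)
        = μB.prod (volume.restrict (Set.Ioc L R)) := by
      rw [hPdef, ← Measure.prod_restrict, Measure.restrict_univ, hμUdef,
        Measure.restrict_restrict measurableSet_Ioc,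
        Set.inter_eq_left.mpr hsubIcc]
    have hPS : P ((Set.univ : Set Bool) ×ˢ Set.Ioc L R) = ENNReal.ofReal len := by
      rw [hPdef, Measure.prod_prod, measure_univ, one_mul, hμUdef,
        Measure.restrict_apply measurableSet_Ioc,
        Set.inter_eq_left.mpr hsubIcc, Real.volume_Ioc]
    simp only [ProbabilityTheory.cond]
    rw [integral_smul_measure, hrestr, hPS]
    have hmap : Measure.map Prod.snd (μB.prod (volume.restrict (Set.Ioc L R)))
        = volume.restrict (Set.Ioc L R) := by
      rw [Measure.map_snd_prod, measure_univ, one_smul]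
    have hchg : ∫ ω, (Y1 ω - Y0 ω) ∂(μB.prod (volume.restrict (Set.Ioc L R)))
        = ∫ u, (f1 u - f0 u) ∂(volume.restrict (Set.Ioc L R)) := by
      have h := integral_map (μ := μB.prod (volume.restrict (Set.Ioc L R)))
        (φ := Prod.snd) measurable_snd.aemeasurable
        (f := fun u => f1 u - f0 u) ((hf1m.sub hf0m).aestronglyMeasurable)
      rw [hmap] at h
      exact h.symm
    rw [hchg, integral_sub (hint t1) (hint t0), key t1 ht1L ht1R, key t0 ht0L ht0R,
      ENNReal.toReal_inv, ENNReal.toReal_ofReal hlenpos.le]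
    have hsub : (t1 - L) - (t0 - L) = βtil * len := by
      rw [ht1def, ht0def]
      linear_combination len * max_zero_sub_max_neg_zero_eq_self βtil
    rw [hsub, smul_eq_mul]
    field_simp
  · -- (vi)
    have hset1 : Z ⁻¹' {1} = ({true} : Set Bool) ×ˢ (Set.univ : Set ℝ) := by
      ext ⟨b, u⟩; cases b <;> simp [hZdef]
    have hset0 : Z ⁻¹' {0} = ({false} : Set Bool) ×ˢ (Set.univ : Set ℝ) := by
      ext ⟨b, u⟩; cases b <;> simp [hZdef]
    have hP1 : P (({true} : Set Bool) ×ˢ (Set.univ : Set ℝ)) = ENNReal.ofReal q := by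
      rw [hPdef, Measure.prod_prod, measure_univ, mul_one, hμBdef]
      simp [Measure.dirac_apply]
    have hP0 : P (({false} : Set Bool) ×ˢ (Set.univ : Set ℝ)) = ENNReal.ofReal (1 - q) := by
      rw [hPdef, Measure.prod_prod, measure_univ, mul_one, hμBdef]
      simp [Measure.dirac_apply]
    have hres1 : P.restrict (({true} : Set Bool) ×ˢ (Set.univ : Set ℝ))
        = ENNReal.ofReal q • ((Measure.dirac true).prod μU) := by
      rw [hPdef, ← Measure.prod_restrict, Measure.restrict_univ, hμBdef,
        Measure.restrict_add, Measure.restrict_smul, Measure.restrict_smul,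
        restrict_dirac, restrict_dirac]
      simp only [Set.mem_singleton_iff, if_true, if_neg (by simp : ¬(false = true))]
      rw [smul_zero, zero_add, aux_smul_prod]
    have hres0 : P.restrict (({false} : Set Bool) ×ˢ (Set.univ : Set ℝ))
        = ENNReal.ofReal (1 - q) • ((Measure.dirac false).prod μU) := by
      rw [hPdef, ← Measure.prod_restrict, Measure.restrict_univ, hμBdef,
        Measure.restrict_add, Measure.restrict_smul, Measure.restrict_smul,
        restrict_dirac, restrict_dirac]
      simp only [Set.mem_singleton_iff, if_true, if_neg (by simp : ¬(true = false))]
      rw [smul_zero, add_zero, aux_smul_prod]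
    have e1 : ∫ u, Y (true, u) ∂μU = t1 - L := by
      have h : ∀ u : ℝ, Y (true, u) = (if u ∈ Set.Ioc L t1 then (1:ℝ) else 0) :=
        fun u => hYtrue u
      simp only [h]
      exact keyU t1 ht1L ht1R
    have e0 : ∫ u, Y (false, u) ∂μU = t0 - L := by
      have h : ∀ u : ℝ, Y (false, u) = (if u ∈ Set.Ioc L t0 then (1:ℝ) else 0) :=
        fun u => hYfalse u
      simp only [h]
      exact keyU t0 ht0L ht0R
    have eint1 : ∫ ω, Y ω ∂((Measure.dirac true).prod μU) = t1 - L := by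
      rw [Measure.dirac_prod, integral_map measurable_prodMk_left.aemeasurable
        hYm.aestronglyMeasurable]
      exact e1
    have eint0 : ∫ ω, Y ω ∂((Measure.dirac false).prod μU) = t0 - L := by
      rw [Measure.dirac_prod, integral_map measurable_prodMk_left.aemeasurable
        hYm.aestronglyMeasurable]
      exact e0
    rw [hset1, hset0]
    simp only [ProbabilityTheory.cond]
    rw [integral_smul_measure, integral_smul_measure, hres1, hres0, hP1, hP0,
      integral_smul_measure, integral_smul_measure, eint1, eint0,
      ENNReal.toReal_inv, ENNReal.toReal_inv, ENNReal.toReal_ofReal hq0.le,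
      ENNReal.toReal_ofReal (by linarith : (0:ℝ) ≤ 1 - q)]
    have hq' : q ≠ 0 := ne_of_gt hq0
    have h1q' : (1 : ℝ) - q ≠ 0 := by intro h; linarith [h]
    simp only [smul_eq_mul]
    rw [inv_mul_cancel_left₀ hq', inv_mul_cancel_left₀ h1q', ht1def, ht0def]
    linear_combination len * max_zero_sub_max_neg_zero_eq_self βtil - hDY
end

section
/- Naive IV covariance identity. Under the generalized selection model, assume in addition that Z is integrable. Then Cov(Z, Y) = ∫₀¹ E[(Z − E[Z])·1{u ≤ P_D(Z)}] · m(u) du; that is, the covariance of the instrument with the observed outcome equals the weighted integral of the conditional-mean treatment effect m with weights u ↦ E[(Z − E[Z])·1{u ≤ P_D(Z)}]. -/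
open MeasureTheory ProbabilityTheory

/-- **Naive IV covariance identity.**
Under the generalized selection model with `Z` integrable,
`Cov(Z, Y) = ∫₀¹ E[(Z − E[Z])·1{u ≤ P_D(Z)}]·m(u) du`, where `m` is the conditional-mean
version of `Y₁ − Y₀` given `U`. -/
theorem stmt_16
    {Ω : Type*} [MeasurableSpace Ω] (P : Measure Ω) [IsProbabilityMeasure P]
    (Z U Y0 Y1 : Ω → ℝ)
    (hZm : Measurable Z) (hUm : Measurable U) (hY0m : Measurable Y0) (hY1m : Measurable Y1)
    (hZint : Integrable Z P)
    (hindep : IndepFun Z (fun ω => (Y0 ω, Y1 ω, U ω)) P)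
    (hUnif : Measure.map U P = volume.restrict (Set.Icc (0:ℝ) 1))
    (hY0int : Integrable Y0 P) (hY1int : Integrable Y1 P)
    (PD : ℝ → ℝ) (hPDm : Measurable PD) (hPD01 : ∀ z, PD z ∈ Set.Icc (0:ℝ) 1)
    (D : Ω → ℝ) (hD : ∀ ω, D ω = if U ω ≤ PD (Z ω) then 1 else 0)
    (Y : Ω → ℝ) (hY : ∀ ω, Y ω = D ω * Y1 ω + (1 - D ω) * Y0 ω)
    (m : ℝ → ℝ) (hmm : Measurable m) (hmint : IntegrableOn m (Set.Icc 0 1) volume)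
    (hmcond : ∀ A : Set ℝ, MeasurableSet A →
      ∫ u in A ∩ Set.Icc (0:ℝ) 1, m u
        = ∫ ω, (Y1 ω - Y0 ω) * A.indicator 1 (U ω) ∂P) :
    ∫ ω, (Z ω - ∫ ω', Z ω' ∂P) * Y ω ∂P
      = ∫ u in (0:ℝ)..1,
          (∫ ω, (Z ω - ∫ ω', Z ω' ∂P) * (if u ≤ PD (Z ω) then 1 else 0) ∂P) * m u := by
  set c := ∫ ω', Z ω' ∂P with hc
  set W : Ω → ℝ × ℝ × ℝ := fun ω => (Y0 ω, Y1 ω, U ω) with hWdef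
  have hWm : Measurable W := (hY0m.prodMk (hY1m.prodMk hUm))
  have hmap : P.map (fun ω => (Z ω, W ω)) = (P.map Z).prod (P.map W) :=
    (indepFun_iff_map_prod_eq_prod_map_map hZm.aemeasurable hWm.aemeasurable).mp hindep
  haveI : IsProbabilityMeasure (P.map Z) := Measure.isProbabilityMeasure_map hZm.aemeasurable
  haveI : IsProbabilityMeasure (P.map W) := Measure.isProbabilityMeasure_map hWm.aemeasurable
  set F : ℝ → ℝ × ℝ × ℝ → ℝ :=
    fun z w => (z - c) * ((if w.2.2 ≤ PD z then 1 else 0) * (w.2.1 - w.1)) with hFdef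
  have hFm : Measurable fun p : ℝ × ℝ × ℝ × ℝ => F p.1 p.2 := by
    apply Measurable.mul
    · exact (measurable_fst.sub measurable_const)
    · apply Measurable.mul
      · exact Measurable.ite
          (measurableSet_le measurable_snd.snd.snd (hPDm.comp measurable_fst))
          measurable_const measurable_const
      · exact measurable_snd.snd.fst.sub measurable_snd.fst
  -- integrability of the main term
  have hZcint : Integrable (fun ω => Z ω - c) P := hZint.sub (integrable_const c)
  have hindepZc : IndepFun (fun ω => Z ω - c) (fun ω => Y1 ω - Y0 ω) P :=
    hindep.comp (measurable_id.sub measurable_const)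
      (measurable_snd.fst.sub measurable_fst)
  have hdomP : Integrable (fun ω => |Z ω - c| * |Y1 ω - Y0 ω|) P := by
    have := (hindepZc.comp (measurable_abs) (measurable_abs)).integrable_mul
      hZcint.abs ((hY1int.sub hY0int)).abs
    exact this
  have hA : Integrable (fun ω => F (Z ω) (W ω)) P := by
    apply Integrable.mono' hdomP
      ((hFm.comp (hZm.prodMk hWm)).aestronglyMeasurable)
    filter_upwards with ω
    simp only [Function.comp_apply, hFdef, hWdef, Real.norm_eq_abs, abs_mul]
    have hb : |(if U ω ≤ PD (Z ω) then (1:ℝ) else 0)| ≤ 1 := by split <;> norm_num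
    nlinarith [mul_nonneg (abs_nonneg (Z ω - c)) (abs_nonneg (Y1 ω - Y0 ω)),
      abs_nonneg (if U ω ≤ PD (Z ω) then (1:ℝ) else 0)]
  have hindepZ0 : IndepFun (fun ω => Z ω - c) Y0 P :=
    hindep.comp (measurable_id.sub measurable_const) measurable_fst
  have hB : Integrable (fun ω => (Z ω - c) * Y0 ω) P :=
    hindepZ0.integrable_mul hZcint hY0int
  -- split off the Y0 part
  have hsplit : ∫ ω, (Z ω - c) * Y ω ∂P = ∫ ω, F (Z ω) (W ω) ∂P := by
    have hpt : ∀ ω, (Z ω - c) * Y ω = F (Z ω) (W ω) + (Z ω - c) * Y0 ω := by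
      intro ω
      simp only [hY, hD, hFdef, hWdef]
      ring
    rw [integral_congr_ae (Filter.Eventually.of_forall hpt), integral_add hA hB]
    have hzero : ∫ ω, (Z ω - c) * Y0 ω ∂P = 0 := by
      have hmul := hindepZ0.integral_mul_eq_mul_integral hZcint.1 hY0int.1
      simp only [Pi.mul_apply] at hmul
      rw [show (∫ ω, (Z ω - c) * Y0 ω ∂P) = ∫ ω, ((fun ω => Z ω - c) * Y0) ω ∂P from rfl,
        hindepZ0.integral_mul_eq_mul_integral hZcint.1 hY0int.1,
        integral_sub hZint (integrable_const c)]
      simp [hc]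
    rw [hzero, add_zero]
  -- move to product measure
  have hTm : Measurable fun ω => (Z ω, W ω) := hZm.prodMk hWm
  have hstep : ∫ ω, F (Z ω) (W ω) ∂P
      = ∫ p : ℝ × ℝ × ℝ × ℝ, F p.1 p.2 ∂((P.map Z).prod (P.map W)) := by
    rw [← hmap, integral_map hTm.aemeasurable hFm.aestronglyMeasurable]
  -- integrability w.r.t. the marginals
  have h1m : Measurable fun z : ℝ => |z - c| := (measurable_id.sub measurable_const).abs
  have h1 : Integrable (fun z : ℝ => |z - c|) (P.map Z) := by
    rw [integrable_map_measure h1m.aestronglyMeasurable hZm.aemeasurable]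
    exact hZcint.abs
  have h2m : Measurable fun w : ℝ × ℝ × ℝ => |w.2.1 - w.1| :=
    (measurable_snd.fst.sub measurable_fst).abs
  have h2 : Integrable (fun w : ℝ × ℝ × ℝ => |w.2.1 - w.1|) (P.map W) := by
    rw [integrable_map_measure h2m.aestronglyMeasurable hWm.aemeasurable]
    exact (hY1int.sub hY0int).abs
  have hprodint : Integrable (fun p : ℝ × ℝ × ℝ × ℝ => F p.1 p.2)
      ((P.map Z).prod (P.map W)) := by
    apply Integrable.mono' (h1.mul_prod h2) hFm.aestronglyMeasurable
    filter_upwards with p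
    simp only [hFdef, Real.norm_eq_abs, abs_mul]
    have hb : |(if p.2.2.2 ≤ PD p.1 then (1:ℝ) else 0)| ≤ 1 := by split <;> norm_num
    nlinarith [mul_nonneg (abs_nonneg (p.1 - c)) (abs_nonneg (p.2.2.1 - p.2.1)),
      abs_nonneg (if p.2.2.2 ≤ PD p.1 then (1:ℝ) else 0)]
  -- Fubini
  have hfub : ∫ p : ℝ × ℝ × ℝ × ℝ, F p.1 p.2 ∂((P.map Z).prod (P.map W))
      = ∫ z, ∫ w, F z w ∂(P.map W) ∂(P.map Z) := integral_prod _ hprodint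
  -- evaluate inner integral
  have hinner : ∀ z : ℝ,
      ∫ w, F z w ∂(P.map W)
        = ∫ u in Set.Icc (0:ℝ) 1, (z - c) * ((if u ≤ PD z then 1 else 0) * m u) := by
    intro z
    have hgm : Measurable fun w : ℝ × ℝ × ℝ =>
        (if w.2.2 ≤ PD z then (1:ℝ) else 0) * (w.2.1 - w.1) := by
      apply Measurable.mul
      · exact Measurable.ite (measurableSet_le measurable_snd.snd measurable_const)
          measurable_const measurable_const
      · exact measurable_snd.fst.sub measurable_fst
    have e1 : ∫ w, F z w ∂(P.map W)
        = (z - c) * ∫ w, (if w.2.2 ≤ PD z then (1:ℝ) else 0) * (w.2.1 - w.1) ∂(P.map W) := by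
      simp only [hFdef]
      exact integral_const_mul _ _
    rw [e1, integral_map hWm.aemeasurable hgm.aestronglyMeasurable]
    have e2 : ∫ ω, (if (W ω).2.2 ≤ PD z then (1:ℝ) else 0) * ((W ω).2.1 - (W ω).1) ∂P
        = ∫ ω, (Y1 ω - Y0 ω) * (Set.Iic (PD z)).indicator 1 (U ω) ∂P := by
      apply integral_congr_ae
      filter_upwards with ω
      simp only [hWdef, Set.indicator_apply, Set.mem_Iic, Pi.one_apply]
      ring
    rw [e2, ← hmcond (Set.Iic (PD z)) measurableSet_Iic]
    have hset : Set.Iic (PD z) ∩ Set.Icc (0:ℝ) 1 = Set.Icc 0 (PD z) := by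
      ext u
      obtain ⟨h0, h1'⟩ := hPD01 z
      simp only [Set.mem_inter_iff, Set.mem_Iic, Set.mem_Icc]
      constructor
      · rintro ⟨hu, hu0, _⟩; exact ⟨hu0, hu⟩
      · rintro ⟨hu0, hu⟩; exact ⟨hu, hu0, hu.trans h1'⟩
    rw [hset]
    -- now show ∫ u in Icc 0 (PD z), m u = RHS
    have e3 : ∫ u in Set.Icc (0:ℝ) 1, (z - c) * ((if u ≤ PD z then 1 else 0) * m u)
        = (z - c) * ∫ u in Set.Icc (0:ℝ) 1, (Set.Iic (PD z)).indicator m u := by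
      rw [integral_const_mul]
      congr 1
      apply integral_congr_ae
      filter_upwards with u
      simp only [Set.indicator_apply, Set.mem_Iic]
      split <;> simp
    rw [e3, setIntegral_indicator measurableSet_Iic,
      Set.inter_comm (Set.Icc (0:ℝ) 1) (Set.Iic (PD z)), hset]
  -- swap the two integrals
  have hHm : Measurable fun p : ℝ × ℝ =>
      (p.1 - c) * ((if p.2 ≤ PD p.1 then (1:ℝ) else 0) * m p.2) := by
    apply Measurable.mul
    · exact measurable_fst.sub measurable_const
    · exact (Measurable.ite (measurableSet_le measurable_snd (hPDm.comp measurable_fst))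
        measurable_const measurable_const).mul (hmm.comp measurable_snd)
  have hswapint : Integrable (fun p : ℝ × ℝ =>
      (p.1 - c) * ((if p.2 ≤ PD p.1 then (1:ℝ) else 0) * m p.2))
      ((P.map Z).prod (volume.restrict (Set.Icc (0:ℝ) 1))) := by
    apply Integrable.mono' (h1.mul_prod hmint.abs) hHm.aestronglyMeasurable
    filter_upwards with p
    simp only [Real.norm_eq_abs, abs_mul]
    have hb : |(if p.2 ≤ PD p.1 then (1:ℝ) else 0)| ≤ 1 := by split <;> norm_num
    nlinarith [mul_nonneg (abs_nonneg (p.1 - c)) (abs_nonneg (m p.2)),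
      abs_nonneg (if p.2 ≤ PD p.1 then (1:ℝ) else 0)]
  have hswap : (∫ z, (∫ u in Set.Icc (0:ℝ) 1,
        (z - c) * ((if u ≤ PD z then 1 else 0) * m u)) ∂(P.map Z))
      = ∫ u in Set.Icc (0:ℝ) 1, (∫ z,
        (z - c) * ((if u ≤ PD z then 1 else 0) * m u) ∂(P.map Z)) :=
    integral_integral_swap hswapint
  -- evaluate the inner integral of the swapped expression
  have hinner2 : ∀ u : ℝ,
      ∫ z, (z - c) * ((if u ≤ PD z then 1 else 0) * m u) ∂(P.map Z)
        = (∫ ω, (Z ω - c) * (if u ≤ PD (Z ω) then 1 else 0) ∂P) * m u := by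
    intro u
    have e4 : ∫ z, (z - c) * ((if u ≤ PD z then 1 else 0) * m u) ∂(P.map Z)
        = (∫ z, (z - c) * (if u ≤ PD z then (1:ℝ) else 0) ∂(P.map Z)) * m u := by
      rw [← integral_mul_const]
      apply integral_congr_ae
      filter_upwards with z
      ring
    rw [e4]
    congr 1
    have hgm2 : Measurable fun z : ℝ => (z - c) * (if u ≤ PD z then (1:ℝ) else 0) :=
      (measurable_id.sub measurable_const).mul
        (Measurable.ite (measurableSet_le measurable_const hPDm)
          measurable_const measurable_const)
    rw [integral_map hZm.aemeasurable hgm2.aestronglyMeasurable]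
  -- assemble
  rw [hsplit, hstep, hfub]
  simp only [hinner]
  rw [hswap, intervalIntegral.integral_of_le zero_le_one, ← integral_Icc_eq_integral_Ioc]
  apply integral_congr_ae
  filter_upwards with u
  rw [hinner2]
end
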